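/- arXiv:1209.1767 — 4 statements merged into one kernel-verified Lean document; each statement's English description precedes it below -/
import Mathlib

section
/- Let X, Y be Hilbert spaces, A ∈ B(X,Y), and T, T' ⊆ X, S, S' ⊆ Y closed subspaces such that G = A_{T,S}^{(2)} exists and max{δ̂(T,T'), δ̂(S,S')} < 1/(1 + ‖A‖·‖G‖)². Then ‖A_{T',S'}^{(2)} − A_{T,S}^{(2)}‖ ≤ ((1+√5)/2) · ‖G‖²·‖A‖·(δ̂(T,T') + δ̂(S,S')) / (1 − ‖G‖·‖A‖·(δ̂(T,T') + δ̂(S,S'))). -/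
noncomputable section

open ContinuousLinearMap

/-- δ(M,N) = sup{dist(x,N) : x ∈ M, ‖x‖ = 1}, with sSup ∅ = 0 covering M = {0}. -/
def gapDelta {H : Type*} [NormedAddCommGroup H] (M N : Set H) : ℝ :=
  sSup ((fun x => Metric.infDist x N) '' {x | x ∈ M ∧ ‖x‖ = 1})

/-- The gap δ̂(M,N) = max{δ(M,N), δ(N,M)}. -/
def gapHat {H : Type*} [NormedAddCommGroup H] (M N : Set H) : ℝ :=
  max (gapDelta M N) (gapDelta N M)

/-- Orthogonal projection onto a closed subspace, as an operator H →L[ℂ] H. -/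
def projCLM {H : Type*} [NormedAddCommGroup H] [InnerProductSpace ℂ H] [CompleteSpace H]
    (K : Submodule ℂ H) (hK : IsClosed (K : Set H)) : H →L[ℂ] H :=
  haveI := hK.completeSpace_coe
  K.subtypeL.comp K.orthogonalProjectionOnto

/-- G is the outer inverse A_{T,S}^{(2)}: GAG = G, R(G) = T, N(G) = S. -/
def IsOuterInv {X Y : Type*} [NormedAddCommGroup X] [NormedSpace ℂ X]
    [NormedAddCommGroup Y] [NormedSpace ℂ Y]
    (A : X →L[ℂ] Y) (T : Submodule ℂ X) (S : Submodule ℂ Y) (G : Y →L[ℂ] X) : Prop :=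
  G ∘L (A ∘L G) = G ∧ LinearMap.range (G : Y →ₗ[ℂ] X) = T ∧ LinearMap.ker (G : Y →ₗ[ℂ] X) = S

/-- B is the Moore–Penrose inverse of A. -/
def IsMPInv {X Y : Type*} [NormedAddCommGroup X] [InnerProductSpace ℂ X] [CompleteSpace X]
    [NormedAddCommGroup Y] [InnerProductSpace ℂ Y] [CompleteSpace Y]
    (A : X →L[ℂ] Y) (B : Y →L[ℂ] X) : Prop :=
  A ∘L (B ∘L A) = A ∧ B ∘L (A ∘L B) = B ∧
  adjoint (A ∘L B) = A ∘L B ∧ adjoint (B ∘L A) = B ∘L A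

set_option linter.unusedSectionVars false

section gaplemmas
variable {H : Type*} [NormedAddCommGroup H] [InnerProductSpace ℂ H] [CompleteSpace H]

lemma projCLM_mem (K : Submodule ℂ H) (hK : IsClosed (K : Set H)) (x : H) :
    projCLM K hK x ∈ K := by
  haveI := hK.completeSpace_coe
  exact K.starProjection_apply_mem x

lemma sub_projCLM_mem (K : Submodule ℂ H) (hK : IsClosed (K : Set H)) (x : H) :
    x - projCLM K hK x ∈ Kᗮ := by
  haveI := hK.completeSpace_coe
  exact K.sub_starProjection_mem_orthogonal x

lemma projCLM_eq_self (K : Submodule ℂ H) (hK : IsClosed (K : Set H)) {x : H} (hx : x ∈ K) :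
    projCLM K hK x = x := by
  haveI := hK.completeSpace_coe
  exact K.starProjection_eq_self_iff.mpr hx

lemma projCLM_eq_zero (K : Submodule ℂ H) (hK : IsClosed (K : Set H)) {x : H} (hx : x ∈ Kᗮ) :
    projCLM K hK x = 0 := by
  haveI := hK.completeSpace_coe
  have h := congrArg Subtype.val (Submodule.orthogonalProjectionOnto_apply_of_mem_orthogonal hx)
  exact h

lemma infDist_eq_norm_sub_projCLM (K : Submodule ℂ H) (hK : IsClosed (K : Set H)) (x : H) :
    Metric.infDist x (K : Set H) = ‖x - projCLM K hK x‖ := by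
  haveI := hK.completeSpace_coe
  have hmin := Submodule.starProjection_minimal (U := K) x
  have : projCLM K hK x = K.starProjection x := by
    rfl
  rw [this, hmin, Metric.infDist_eq_iInf]
  simp_rw [dist_eq_norm]
  rfl

lemma gapDelta_nonneg (M N : Set H) : 0 ≤ gapDelta M N := by
  apply Real.sSup_nonneg
  rintro r ⟨x, -, rfl⟩
  exact Metric.infDist_nonneg

lemma gapDelta_bddAbove (M : Set H) (N : Submodule ℂ H) :
    BddAbove ((fun x => Metric.infDist x (N : Set H)) '' {x | x ∈ M ∧ ‖x‖ = 1}) := by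
  refine ⟨1, ?_⟩
  rintro r ⟨x, ⟨-, hx⟩, rfl⟩
  have h0 : (0 : H) ∈ (N : Set H) := N.zero_mem
  calc Metric.infDist x (N : Set H) ≤ dist x 0 := Metric.infDist_le_dist_of_mem h0
    _ = 1 := by simp [dist_eq_norm, hx]

/-- Key: for `x ∈ M`, `‖x - P_N x‖ ≤ gapDelta M N * ‖x‖`. -/
lemma norm_sub_proj_le (M : Submodule ℂ H) (N : Submodule ℂ H) (hN : IsClosed (N : Set H))
    {x : H} (hx : x ∈ M) :
    ‖x - projCLM N hN x‖ ≤ gapDelta (M : Set H) (N : Set H) * ‖x‖ := by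
  rcases eq_or_ne x 0 with rfl | hx0
  · simp
  · have hnx : ‖x‖ ≠ 0 := norm_ne_zero_iff.mpr hx0
    set c : ℂ := (‖x‖ : ℂ)⁻¹ with hc
    have hy : (c • x) ∈ M := M.smul_mem c hx
    have hyn : ‖c • x‖ = 1 := by
      rw [norm_smul, hc]
      simp [norm_inv, hnx]
    have hmem : Metric.infDist (c • x) (N : Set H) ∈
        ((fun z => Metric.infDist z (N : Set H)) '' {z | z ∈ (M : Set H) ∧ ‖z‖ = 1}) :=
      ⟨c • x, ⟨hy, hyn⟩, rfl⟩
    have h1 : Metric.infDist (c • x) (N : Set H) ≤ gapDelta (M : Set H) (N : Set H) :=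
      le_csSup (gapDelta_bddAbove _ N) hmem
    rw [infDist_eq_norm_sub_projCLM N hN] at h1
    have h2 : (projCLM N hN) (c • x) = c • projCLM N hN x := by
      exact (projCLM N hN).map_smul c x
    rw [h2, ← smul_sub, norm_smul, hc] at h1
    have : ‖(‖x‖ : ℂ)⁻¹‖ = ‖x‖⁻¹ := by
      simp
    rw [this] at h1
    have hpos : (0:ℝ) < ‖x‖ := lt_of_le_of_ne (norm_nonneg x) (Ne.symm hnx)
    calc ‖x - projCLM N hN x‖ = (‖x‖⁻¹ * ‖x - projCLM N hN x‖) * ‖x‖ := by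
          field_simp
      _ ≤ gapDelta (M : Set H) (N : Set H) * ‖x‖ :=
          mul_le_mul_of_nonneg_right h1 (norm_nonneg x)

lemma gapDelta_self_submodule (M : Submodule ℂ H) : gapDelta (M : Set H) (M : Set H) = 0 := by
  apply le_antisymm
  · apply Real.sSup_le
    · rintro r ⟨x, ⟨hx, -⟩, rfl⟩
      simp [Metric.infDist_zero_of_mem hx]
    · norm_num
  · exact gapDelta_nonneg _ _

end gaplemmas

section part2
variable {H : Type*} [NormedAddCommGroup H] [InnerProductSpace ℂ H] [CompleteSpace H]
set_option linter.unusedSectionVars false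

lemma pythag {a b : H} (h : (inner ℂ a b : ℂ) = 0) : ‖a + b‖ ^ 2 = ‖a‖ ^ 2 + ‖b‖ ^ 2 := by
  have := norm_add_sq_eq_norm_sq_add_norm_sq_of_inner_eq_zero a b h
  ring_nf; ring_nf at this; linarith

lemma pythag_sub {a b : H} (h : (inner ℂ a b : ℂ) = 0) : ‖a - b‖ ^ 2 = ‖a‖ ^ 2 + ‖b‖ ^ 2 := by
  have h' : (inner ℂ a (-b) : ℂ) = 0 := by rw [inner_neg_right, h, neg_zero]
  simpa [sub_eq_add_neg] using pythag h'

/-- `‖P_V u‖ ≤ δ(V,U) ‖u‖` for `u ⊥ U`. -/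
lemma norm_proj_orth_le (U V : Submodule ℂ H) (hU : IsClosed (U : Set H))
    (hV : IsClosed (V : Set H)) {u : H} (hu : u ∈ Uᗮ) :
    ‖projCLM V hV u‖ ≤ gapDelta (V : Set H) (U : Set H) * ‖u‖ := by
  set b := projCLM V hV u with hb
  have hbV : b ∈ V := projCLM_mem V hV u
  have h1 : (inner ℂ b (u - b) : ℂ) = 0 :=
    (Submodule.mem_orthogonal V (u - b)).mp (sub_projCLM_mem V hV u) b hbV
  have h2 : (inner ℂ b u : ℂ) = (‖b‖ : ℂ) ^ 2 := by
    have e : (inner ℂ b u : ℂ) = inner ℂ b (u - b) + inner ℂ b b := by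
      rw [← inner_add_right]; congr 1; abel
    rw [e, h1, zero_add, inner_self_eq_norm_sq_to_K]
    norm_num
  have h3 : (inner ℂ (projCLM U hU b) u : ℂ) = 0 :=
    (Submodule.mem_orthogonal U u).mp hu _ (projCLM_mem U hU b)
  have h4 : (inner ℂ (b - projCLM U hU b) u : ℂ) = (‖b‖ : ℂ) ^ 2 := by
    rw [inner_sub_left, h3, sub_zero, h2]
  have h5 : ‖b‖ ^ 2 ≤ ‖b - projCLM U hU b‖ * ‖u‖ := by
    have hnn : ‖(inner ℂ (b - projCLM U hU b) u : ℂ)‖ = ‖b‖ ^ 2 := by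
      rw [h4, norm_pow, Complex.norm_real, Real.norm_eq_abs, abs_of_nonneg (norm_nonneg b)]
    calc ‖b‖ ^ 2 = ‖(inner ℂ (b - projCLM U hU b) u : ℂ)‖ := hnn.symm
      _ ≤ ‖b - projCLM U hU b‖ * ‖u‖ := norm_inner_le_norm _ _
  have h6 : ‖b - projCLM U hU b‖ ≤ gapDelta (V : Set H) (U : Set H) * ‖b‖ :=
    norm_sub_proj_le V U hU hbV
  rcases eq_or_lt_of_le (norm_nonneg b) with h0 | h0
  · rw [← h0]
    exact mul_nonneg (gapDelta_nonneg _ _) (norm_nonneg u)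
  · have := le_trans h5 (mul_le_mul_of_nonneg_right h6 (norm_nonneg u))
    nlinarith

lemma proj_pythag (U : Submodule ℂ H) (hU : IsClosed (U : Set H)) (x : H) :
    ‖projCLM U hU x‖ ^ 2 + ‖x - projCLM U hU x‖ ^ 2 = ‖x‖ ^ 2 := by
  have h : (inner ℂ (projCLM U hU x) (x - projCLM U hU x) : ℂ) = 0 :=
    (Submodule.mem_orthogonal U _).mp (sub_projCLM_mem U hU x) _ (projCLM_mem U hU x)
  have := pythag h
  simpa using this.symm

/-- Kato-type bound: `‖(P_U - P_V) x‖ ≤ gapHat U V ‖x‖`. -/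
lemma proj_diff_le (U V : Submodule ℂ H) (hU : IsClosed (U : Set H))
    (hV : IsClosed (V : Set H)) (x : H) :
    ‖projCLM U hU x - projCLM V hV x‖ ≤ gapHat (U : Set H) (V : Set H) * ‖x‖ := by
  set P := projCLM U hU
  set P' := projCLM V hV
  set a := P x - P' (P x) with ha
  set b := P' (x - P x) with hbdef
  have hid : P x - P' x = a - b := by
    simp only [ha, hbdef, map_sub]; abel
  have haV : a ∈ Vᗮ := sub_projCLM_mem V hV (P x)
  have hbV : b ∈ V := projCLM_mem V hV _
  have hab : (inner ℂ a b : ℂ) = 0 :=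
    inner_eq_zero_symm.mp ((Submodule.mem_orthogonal V a).mp haV b hbV)
  have hpy : ‖a - b‖ ^ 2 = ‖a‖ ^ 2 + ‖b‖ ^ 2 := pythag_sub hab
  have hA : ‖a‖ ≤ gapDelta (U : Set H) (V : Set H) * ‖P x‖ :=
    norm_sub_proj_le U V hV (projCLM_mem U hU x)
  have hB : ‖b‖ ≤ gapDelta (V : Set H) (U : Set H) * ‖x - P x‖ :=
    norm_proj_orth_le U V hU hV (sub_projCLM_mem U hU x)
  have hsum := proj_pythag U hU x
  have hmax1 : gapDelta (U : Set H) (V : Set H) ≤ gapHat (U : Set H) (V : Set H) := le_max_left _ _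
  have hmax2 : gapDelta (V : Set H) (U : Set H) ≤ gapHat (U : Set H) (V : Set H) := le_max_right _ _
  have hg0 : 0 ≤ gapHat (U : Set H) (V : Set H) := le_trans (gapDelta_nonneg _ _) hmax1
  have hA' : ‖a‖ ≤ gapHat (U : Set H) (V : Set H) * ‖P x‖ :=
    le_trans hA (mul_le_mul_of_nonneg_right hmax1 (norm_nonneg _))
  have hB' : ‖b‖ ≤ gapHat (U : Set H) (V : Set H) * ‖x - P x‖ :=
    le_trans hB (mul_le_mul_of_nonneg_right hmax2 (norm_nonneg _))
  have e1 := mul_self_le_mul_self (norm_nonneg a) hA'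
  have e2 := mul_self_le_mul_self (norm_nonneg b) hB'
  have h1 : ‖P x - P' x‖ ^ 2 ≤ gapHat (U : Set H) (V : Set H) ^ 2 * ‖x‖ ^ 2 := by
    rw [hid, hpy]
    nlinarith [hsum]
  have h2 : 0 ≤ gapHat (U : Set H) (V : Set H) * ‖x‖ := mul_nonneg hg0 (norm_nonneg x)
  nlinarith [norm_nonneg (P x - P' x), sq_nonneg (‖P x - P' x‖ + gapHat (U : Set H) (V : Set H) * ‖x‖)]

lemma idem_norm_ge_one {F : H →L[ℂ] H} (hF : F ∘L F = F) (h0 : F ≠ 0) : 1 ≤ ‖F‖ := by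
  have h1 : ‖F‖ ≤ ‖F‖ * ‖F‖ := by
    conv_lhs => rw [← hF]
    exact ContinuousLinearMap.opNorm_comp_le F F
  have h2 : 0 < ‖F‖ := norm_pos_iff.mpr h0
  nlinarith

set_option maxHeartbeats 1000000 in
/-- For an idempotent `F ≠ 0` on a Hilbert space, `‖(1-F) z‖ ≤ ‖F‖ ‖z‖`. -/
lemma idem_one_sub_le {F : H →L[ℂ] H} (hF : F ∘L F = F) (h0 : F ≠ 0) (z : H) :
    ‖z - F z‖ ≤ ‖F‖ * ‖z‖ := by
  classical
  have hFapp : ∀ y, F (F y) = F y := by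
    intro y
    have := congrArg (fun (T : H →L[ℂ] H) => T y) hF
    simpa using this
  set K : Submodule ℂ H := LinearMap.ker ((1 - F : H →L[ℂ] H) : H →ₗ[ℂ] H) with hK
  have hKc : IsClosed (K : Set H) := ContinuousLinearMap.isClosed_ker (1 - F)
  have hmemK : ∀ y, F y ∈ K := by
    intro y
    simp [hK, LinearMap.mem_ker, hFapp y, ContinuousLinearMap.sub_apply]
  set w := z - projCLM K hKc z with hw
  have hwO : w ∈ Kᗮ := sub_projCLM_mem K hKc z
  have hwz : ‖w‖ ≤ ‖z‖ := by
    have := proj_pythag K hKc z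
    nlinarith [norm_nonneg (projCLM K hKc z), norm_nonneg w, norm_nonneg z]
  have hzw : z - F z = w - F w := by
    have hRz : projCLM K hKc z ∈ K := projCLM_mem K hKc z
    have h' : (1 - F) (projCLM K hKc z) = 0 := hRz
    simp only [ContinuousLinearMap.sub_apply, ContinuousLinearMap.one_apply] at h'
    have hfix : F (projCLM K hKc z) = projCLM K hKc z := by
      linear_combination (norm := module) -h'
    simp only [hw, map_sub, hfix]
    abel
  have hwr : (inner ℂ w (F w) : ℂ) = 0 :=
    inner_eq_zero_symm.mp ((Submodule.mem_orthogonal K w).mp hwO _ (hmemK w))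
  have hF1 : 1 ≤ ‖F‖ := idem_norm_ge_one hF h0
  rcases eq_or_ne (F w) 0 with hr0 | hr0
  · rw [hzw, hr0, sub_zero]
    calc ‖w‖ ≤ ‖z‖ := hwz
      _ = 1 * ‖z‖ := (one_mul _).symm
      _ ≤ ‖F‖ * ‖z‖ := mul_le_mul_of_nonneg_right hF1 (norm_nonneg z)
  · have hrpos : 0 < ‖F w‖ := norm_pos_iff.mpr hr0
    set t : ℝ := ‖w‖ ^ 2 / ‖F w‖ ^ 2 with ht
    have ht0 : 0 ≤ t := by positivity
    have hFtest : F (w + (t : ℂ) • F w) = ((1 + t : ℝ) : ℂ) • F w := by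
      rw [map_add, map_smul, hFapp w]
      push_cast
      rw [add_smul, one_smul]
    have htest : ‖w + (t : ℂ) • F w‖ ^ 2 = ‖w‖ ^ 2 + t ^ 2 * ‖F w‖ ^ 2 := by
      have hi : (inner ℂ w ((t : ℂ) • F w) : ℂ) = 0 := by
        rw [inner_smul_right, hwr, mul_zero]
      rw [pythag hi, norm_smul]
      norm_num [Complex.norm_real, abs_of_nonneg ht0]
      ring
    have hineq := F.le_opNorm (w + (t : ℂ) • F w)
    rw [hFtest] at hineq
    have hnorm1 : ‖((1 + t : ℝ) : ℂ) • F w‖ = (1 + t) * ‖F w‖ := by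
      rw [norm_smul, Complex.norm_real, Real.norm_eq_abs, abs_of_nonneg (by linarith : (0:ℝ) ≤ 1 + t)]
    rw [hnorm1] at hineq
    have hsq : (1 + t) ^ 2 * ‖F w‖ ^ 2 ≤ ‖F‖ ^ 2 * (‖w‖ ^ 2 + t ^ 2 * ‖F w‖ ^ 2) := by
      have h2 := mul_self_le_mul_self (by positivity) hineq
      nlinarith [htest]
    have hr2 : (0:ℝ) < ‖F w‖ ^ 2 := by positivity
    have ht' : t * ‖F w‖ ^ 2 = ‖w‖ ^ 2 := by
      rw [ht]; field_simp
    have hbig : (‖F w‖ ^ 2 + ‖w‖ ^ 2) ^ 2 ≤ ‖F‖ ^ 2 * ‖w‖ ^ 2 * (‖F w‖ ^ 2 + ‖w‖ ^ 2) := by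
      have hthis := mul_le_mul_of_nonneg_right hsq (le_of_lt hr2)
      have e2 : t ^ 2 * (‖F w‖ ^ 2) ^ 2 = (‖w‖ ^ 2) ^ 2 := by
        have := congrArg (fun s : ℝ => s ^ 2) ht'
        simpa [mul_pow] using this
      nlinarith [hthis, ht', e2]
    have hkey : ‖w‖ ^ 2 + ‖F w‖ ^ 2 ≤ ‖F‖ ^ 2 * ‖w‖ ^ 2 := by
      have hpos : (0:ℝ) < ‖F w‖ ^ 2 + ‖w‖ ^ 2 := by positivity
      have h' : (‖F w‖ ^ 2 + ‖w‖ ^ 2) * (‖F w‖ ^ 2 + ‖w‖ ^ 2) ≤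
          (‖F‖ ^ 2 * ‖w‖ ^ 2) * (‖F w‖ ^ 2 + ‖w‖ ^ 2) := by
        rw [pow_two] at hbig; exact hbig
      have := le_of_mul_le_mul_right h' hpos
      linarith
    have hfin : ‖z - F z‖ ^ 2 = ‖w‖ ^ 2 + ‖F w‖ ^ 2 := by
      rw [hzw, pythag_sub hwr]
    have hWz := mul_self_le_mul_self (norm_nonneg w) hwz
    nlinarith [hfin, hkey, norm_nonneg (z - F z), mul_nonneg (norm_nonneg F) (norm_nonneg z),
      sq_nonneg (‖z - F z‖ + ‖F‖ * ‖z‖), hF1]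
end part2

section part3
variable {H : Type*} [NormedAddCommGroup H] [InnerProductSpace ℂ H] [CompleteSpace H]
set_option linter.unusedSectionVars false

lemma norm_eq_of_sq_eq {a b : ℝ} (h : a ^ 2 = b ^ 2) (ha : 0 ≤ a) (hb : 0 ≤ b) : a = b := by
  refine le_antisymm ?_ ?_ <;> nlinarith

lemma gapHat_nonneg (M N : Set H) : 0 ≤ gapHat M N :=
  le_trans (gapDelta_nonneg _ _) (le_max_left _ _)

/-- The map `D = 1 + (P_V - P_U)(2 P_U - 1)` is invertible when the gap is `< 1`,
maps `U` onto `V`, and is a small perturbation of the identity. -/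
lemma exists_Dmap (U V : Submodule ℂ H) (hU : IsClosed (U : Set H)) (hV : IsClosed (V : Set H))
    (hlt : gapHat (U : Set H) (V : Set H) < 1) :
    ∃ D Dinv : H →L[ℂ] H,
      (∀ y, D (Dinv y) = y) ∧ (∀ y, Dinv (D y) = y) ∧
      (∀ x, ‖D x - x‖ ≤ gapHat (U : Set H) (V : Set H) * ‖x‖) ∧
      (∀ u ∈ U, D u = projCLM V hV u) ∧
      (∀ v ∈ V, ∃ u ∈ U, D u = v) ∧
      (∀ y, ‖Dinv y‖ ≤ (1 - gapHat (U : Set H) (V : Set H))⁻¹ * ‖y‖) := by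
  classical
  set δ := gapHat (U : Set H) (V : Set H) with hδ
  have hδ0 : 0 ≤ δ := gapHat_nonneg _ _
  set P := projCLM U hU with hP
  set P' := projCLM V hV with hP'
  set R : H →L[ℂ] H := (2 : ℂ) • P - 1 with hR
  have hRnorm : ∀ x, ‖R x‖ = ‖x‖ := by
    intro x
    have h1 : R x = P x - (x - P x) := by
      simp only [hR, ContinuousLinearMap.sub_apply, ContinuousLinearMap.smul_apply,
        ContinuousLinearMap.one_apply]
      module
    have h2 : (inner ℂ (P x) (x - P x) : ℂ) = 0 :=
      (Submodule.mem_orthogonal U _).mp (sub_projCLM_mem U hU x) _ (projCLM_mem U hU x)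
    have h3 := pythag_sub h2
    have h4 := proj_pythag U hU x
    refine norm_eq_of_sq_eq ?_ (norm_nonneg _) (norm_nonneg _)
    rw [h1, h3]; linarith
  set Δ : H →L[ℂ] H := (P' - P) ∘L R with hΔ
  have hΔle : ∀ x, ‖Δ x‖ ≤ δ * ‖x‖ := by
    intro x
    have e : Δ x = -(P (R x) - P' (R x)) := by
      simp only [hΔ, ContinuousLinearMap.comp_apply, ContinuousLinearMap.sub_apply]
      abel
    rw [e, norm_neg]
    calc ‖P (R x) - P' (R x)‖ ≤ δ * ‖R x‖ := proj_diff_le U V hU hV (R x)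
      _ = δ * ‖x‖ := by rw [hRnorm]
  have hΔnorm : ‖Δ‖ ≤ δ := ContinuousLinearMap.opNorm_le_bound _ hδ0 hΔle
  have hneg : ‖-Δ‖ < 1 := by rw [norm_neg]; exact lt_of_le_of_lt hΔnorm hlt
  set uu : (H →L[ℂ] H)ˣ := Units.oneSub (-Δ) hneg with huu
  set D : H →L[ℂ] H := (uu : H →L[ℂ] H) with hD
  set Dinv : H →L[ℂ] H := ((uu⁻¹ : (H →L[ℂ] H)ˣ) : H →L[ℂ] H) with hDinv
  have huval : D = 1 + Δ := by
    rw [hD, huu]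
    show (1 : H →L[ℂ] H) - (-Δ) = 1 + Δ
    rw [sub_neg_eq_add]
  have hDI : ∀ y, D (Dinv y) = y := by
    intro y
    calc D (Dinv y) = (D * Dinv) y := (ContinuousLinearMap.mul_apply _ _ _).symm
      _ = (1 : H →L[ℂ] H) y := by rw [hD, hDinv, uu.mul_inv]
      _ = y := rfl
  have hID : ∀ y, Dinv (D y) = y := by
    intro y
    calc Dinv (D y) = (Dinv * D) y := (ContinuousLinearMap.mul_apply _ _ _).symm
      _ = (1 : H →L[ℂ] H) y := by rw [hD, hDinv, uu.inv_mul]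
      _ = y := rfl
  have hDapp : ∀ x, D x = x + Δ x := by
    intro x
    rw [huval]
    simp [ContinuousLinearMap.add_apply]
  have hDsub : ∀ x, ‖D x - x‖ ≤ δ * ‖x‖ := by
    intro x
    rw [hDapp]
    simpa using hΔle x
  have hDu : ∀ u ∈ U, D u = P' u := by
    intro u hu
    have hPu : P u = u := projCLM_eq_self U hU hu
    have hRu : R u = u := by
      simp only [hR, ContinuousLinearMap.sub_apply, ContinuousLinearMap.smul_apply,
        ContinuousLinearMap.one_apply, hPu]
      module
    have hΔu : Δ u = P' u - u := by
      simp only [hΔ, ContinuousLinearMap.comp_apply, hRu, ContinuousLinearMap.sub_apply, hPu]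
    rw [hDapp, hΔu]; abel
  have hDb : ∀ b ∈ Uᗮ, D b = b - P' b := by
    intro b hb
    have hPb : P b = 0 := projCLM_eq_zero U hU hb
    have hRb : R b = -b := by
      simp only [hR, ContinuousLinearMap.sub_apply, ContinuousLinearMap.smul_apply,
        ContinuousLinearMap.one_apply, hPb]
      module
    have hΔb : Δ b = -(P' b) := by
      simp only [hΔ, ContinuousLinearMap.comp_apply, hRb, ContinuousLinearMap.sub_apply,
        map_neg, hPb]
      abel
    rw [hDapp, hΔb]; abel
  refine ⟨D, Dinv, hDI, hID, hDsub, hDu, ?_, ?_⟩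
  · -- surjectivity onto V from U
    intro v hv
    set x := Dinv v with hx
    set a := P x with haa
    have haU : a ∈ U := projCLM_mem U hU x
    have hbU : x - a ∈ Uᗮ := sub_projCLM_mem U hU x
    have hDx : D x = v := hDI v
    have hsplit : D a + D (x - a) = v := by
      rw [← map_add]
      have : a + (x - a) = x := by abel
      rw [this, hDx]
    have hDaV : D a ∈ V := by rw [hDu a haU]; exact projCLM_mem V hV a
    have hP'Da : P' (D a) = D a := projCLM_eq_self V hV hDaV
    have hDxa : D (x - a) = (x - a) - P' (x - a) := hDb _ hbU
    have hP'Dxa : P' (D (x - a)) = 0 := by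
      rw [hDxa, map_sub]
      rw [projCLM_eq_self V hV (projCLM_mem V hV (x - a))]
      abel
    have hP'v : P' v = v := projCLM_eq_self V hV hv
    have hzero : D (x - a) = 0 := by
      have h1 : P' (D a) + P' (D (x - a)) = P' v := by
        rw [← map_add, hsplit]
      rw [hP'Da, hP'Dxa, add_zero, hP'v] at h1
      -- h1 : D a = v
      have : D a + D (x - a) = D a := by rw [hsplit, h1]
      linear_combination (norm := abel) this
    have hxa : x - a = 0 := by
      have := hID (x - a)
      rw [hzero, map_zero] at this
      exact this.symm
    have hxU : x ∈ U := by
      have : x = a := by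
        have := hxa
        linear_combination (norm := module) this
      rw [this]; exact haU
    exact ⟨x, hxU, hDx⟩
  · -- inverse norm bound
    intro y
    have h1δ : 0 < 1 - δ := by linarith
    have htri : ‖Dinv y‖ ≤ ‖y‖ + ‖D (Dinv y) - Dinv y‖ := by
      have : Dinv y = y - (D (Dinv y) - Dinv y) := by
        rw [hDI y]; abel
      calc ‖Dinv y‖ = ‖y - (D (Dinv y) - Dinv y)‖ := by rw [← this]
        _ ≤ ‖y‖ + ‖D (Dinv y) - Dinv y‖ := norm_sub_le _ _
    have hsm := hDsub (Dinv y)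
    rw [inv_mul_eq_div, le_div_iff₀ h1δ]
    nlinarith [norm_nonneg (Dinv y)]
end part3

section construction
variable {X Y : Type*} [NormedAddCommGroup X] [InnerProductSpace ℂ X] [CompleteSpace X]
  [NormedAddCommGroup Y] [InnerProductSpace ℂ Y] [CompleteSpace Y]
set_option linter.unusedSectionVars false

/-- Existence of the outer inverse with perturbed range and kernel. -/
lemma exists_outerInv (A : X →L[ℂ] Y) (T T' : Submodule ℂ X) (S S' : Submodule ℂ Y)
    (hT : IsClosed (T : Set X)) (hT' : IsClosed (T' : Set X))
    (hS : IsClosed (S : Set Y)) (hS' : IsClosed (S' : Set Y))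
    (G : Y →L[ℂ] X) (hG : IsOuterInv A T S G)
    (h1 : gapHat (T : Set X) (T' : Set X) < 1) (h2 : gapHat (S : Set Y) (S' : Set Y) < 1)
    (hsmall : ‖A‖ * ‖G‖ * (gapHat (T : Set X) (T' : Set X) + gapHat (S : Set Y) (S' : Set Y))
      + gapHat (S : Set Y) (S' : Set Y) < 1) :
    ∃ G' : Y →L[ℂ] X, IsOuterInv A T' S' G' := by
  classical
  obtain ⟨D₁, D₁inv, hD₁I, hID₁, hD₁sub, hD₁u, hD₁surj, hD₁inv⟩ := exists_Dmap T T' hT hT' h1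
  obtain ⟨D₂, D₂inv, hD₂I, hID₂, hD₂sub, hD₂u, hD₂surj, hD₂inv⟩ := exists_Dmap S S' hS hS' h2
  set δ1 := gapHat (T : Set X) (T' : Set X) with hδ1
  set δ2 := gapHat (S : Set Y) (S' : Set Y) with hδ2
  have hδ10 : 0 ≤ δ1 := gapHat_nonneg _ _
  have hδ20 : 0 ≤ δ2 := gapHat_nonneg _ _
  have hGAG : ∀ y, G (A (G y)) = G y := by
    intro y
    have := congrArg (fun (M : Y →L[ℂ] X) => M y) hG.1
    simpa using this
  have hmemS : ∀ y, G y = 0 ↔ y ∈ S := by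
    intro y
    rw [← hG.2.2]
    exact Iff.rfl
  have hmemT : ∀ x, x ∈ T ↔ ∃ y, G y = x := by
    intro x
    rw [← hG.2.1]
    exact ⟨fun h => h, fun h => h⟩
  -- the candidate
  set Hop : Y →L[ℂ] X := D₁ ∘L (G ∘L D₂inv) with hHop
  set F' : Y →L[ℂ] Y := D₂ ∘L ((A ∘L G) ∘L D₂inv) with hF'
  set W : Y →L[ℂ] Y := (A ∘L Hop) + 1 - F' with hW
  have hWapp : ∀ y, W y = A (Hop y) + y - F' y := by
    intro y
    simp [hW, ContinuousLinearMap.sub_apply, ContinuousLinearMap.add_apply,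
      ContinuousLinearMap.comp_apply]
  -- norm estimate for W - 1
  have hWsub : ∀ y, ‖W y - y‖ ≤ (‖A‖ * ‖G‖ * (δ1 + δ2)) * ((1 - δ2)⁻¹ * ‖y‖) := by
    intro y
    set q := D₂inv y with hq
    have e : W y - y = A (D₁ (G q) - G q) - (D₂ (A (G q)) - A (G q)) := by
      rw [hWapp]
      simp only [hHop, hF', ContinuousLinearMap.comp_apply, ← hq, map_sub]
      abel
    rw [e]
    have b1 : ‖A (D₁ (G q) - G q)‖ ≤ ‖A‖ * (δ1 * ‖G q‖) := by
      calc ‖A (D₁ (G q) - G q)‖ ≤ ‖A‖ * ‖D₁ (G q) - G q‖ := A.le_opNorm _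
        _ ≤ ‖A‖ * (δ1 * ‖G q‖) := by
            exact mul_le_mul_of_nonneg_left (hD₁sub (G q)) (norm_nonneg A)
    have b2 : ‖D₂ (A (G q)) - A (G q)‖ ≤ δ2 * (‖A‖ * ‖G q‖) := by
      calc ‖D₂ (A (G q)) - A (G q)‖ ≤ δ2 * ‖A (G q)‖ := hD₂sub _
        _ ≤ δ2 * (‖A‖ * ‖G q‖) :=
            mul_le_mul_of_nonneg_left (A.le_opNorm _) hδ20
    have bq : ‖G q‖ ≤ ‖G‖ * ((1 - δ2)⁻¹ * ‖y‖) := by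
      calc ‖G q‖ ≤ ‖G‖ * ‖q‖ := G.le_opNorm _
        _ ≤ ‖G‖ * ((1 - δ2)⁻¹ * ‖y‖) :=
            mul_le_mul_of_nonneg_left (hD₂inv y) (norm_nonneg G)
    calc ‖A (D₁ (G q) - G q) - (D₂ (A (G q)) - A (G q))‖
        ≤ ‖A (D₁ (G q) - G q)‖ + ‖D₂ (A (G q)) - A (G q)‖ := norm_sub_le _ _
      _ ≤ ‖A‖ * (δ1 * ‖G q‖) + δ2 * (‖A‖ * ‖G q‖) := add_le_add b1 b2
      _ = ‖A‖ * (δ1 + δ2) * ‖G q‖ := by ring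
      _ ≤ ‖A‖ * (δ1 + δ2) * (‖G‖ * ((1 - δ2)⁻¹ * ‖y‖)) := by
          apply mul_le_mul_of_nonneg_left bq
          positivity
      _ = ‖A‖ * ‖G‖ * (δ1 + δ2) * ((1 - δ2)⁻¹ * ‖y‖) := by ring
  have h1δ2 : 0 < 1 - δ2 := by linarith
  have hcnn : 0 ≤ ‖A‖ * ‖G‖ * (δ1 + δ2) * (1 - δ2)⁻¹ := by positivity
  have hWnorm : ‖W - 1‖ < 1 := by
    have hb : ‖W - 1‖ ≤ ‖A‖ * ‖G‖ * (δ1 + δ2) * (1 - δ2)⁻¹ := by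
      apply ContinuousLinearMap.opNorm_le_bound _ hcnn
      intro y
      have := hWsub y
      simpa [ContinuousLinearMap.sub_apply, mul_assoc] using this
    have hclt : ‖A‖ * ‖G‖ * (δ1 + δ2) * (1 - δ2)⁻¹ < 1 := by
      rw [show ‖A‖ * ‖G‖ * (δ1 + δ2) * (1 - δ2)⁻¹ = ‖A‖ * ‖G‖ * (δ1 + δ2) / (1 - δ2) from by
        ring, div_lt_one h1δ2]
      linarith
    linarith
  have hneg' : ‖-(W - 1)‖ < 1 := by rwa [norm_neg]
  set uu : (Y →L[ℂ] Y)ˣ := Units.oneSub (-(W - 1)) hneg' with huu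
  have huval : (uu : Y →L[ℂ] Y) = W := by
    rw [huu]
    show (1 : Y →L[ℂ] Y) - (-(W - 1)) = W
    rw [sub_neg_eq_add]; abel
  set Winv : Y →L[ℂ] Y := ((uu⁻¹ : (Y →L[ℂ] Y)ˣ) : Y →L[ℂ] Y) with hWinv
  have hWI : ∀ y, W (Winv y) = y := by
    intro y
    calc W (Winv y) = ((uu : Y →L[ℂ] Y) * Winv) y := by
          rw [huval]; exact (ContinuousLinearMap.mul_apply _ _ _).symm
      _ = (1 : Y →L[ℂ] Y) y := by rw [hWinv, uu.mul_inv]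
      _ = y := rfl
  have hIW : ∀ y, Winv (W y) = y := by
    intro y
    calc Winv (W y) = (Winv * (uu : Y →L[ℂ] Y)) y := by
          rw [huval]; exact (ContinuousLinearMap.mul_apply _ _ _).symm
      _ = (1 : Y →L[ℂ] Y) y := by rw [hWinv, uu.inv_mul]
      _ = y := rfl
  -- pointwise structural facts
  have hD₂invS' : ∀ s' ∈ S', D₂inv s' ∈ S := by
    intro s' hs'
    obtain ⟨σ, hσS, hσ⟩ := hD₂surj s' hs'
    have : D₂inv s' = σ := by rw [← hσ, hID₂]
    rw [this]; exact hσS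
  have hD₂S : ∀ σ ∈ S, D₂ σ ∈ S' := by
    intro σ hσ
    rw [hD₂u σ hσ]
    exact projCLM_mem S' hS' σ
  have hHopS' : ∀ s' ∈ S', Hop s' = 0 := by
    intro s' hs'
    have : G (D₂inv s') = 0 := (hmemS _).mpr (hD₂invS' s' hs')
    simp [hHop, ContinuousLinearMap.comp_apply, this]
  have hF'S' : ∀ s' ∈ S', F' s' = 0 := by
    intro s' hs'
    have : G (D₂inv s') = 0 := (hmemS _).mpr (hD₂invS' s' hs')
    have hAG : A (G (D₂inv s')) = 0 := by rw [this, map_zero]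
    simp [hF', ContinuousLinearMap.comp_apply, hAG]
  have hWS' : ∀ s' ∈ S', W s' = s' := by
    intro s' hs'
    rw [hWapp, hHopS' s' hs', hF'S' s' hs', map_zero]
    abel
  have hWinvS' : ∀ s' ∈ S', Winv s' = s' := by
    intro s' hs'
    conv_lhs => rw [← hWS' s' hs']
    exact hIW s'
  have hkerF' : ∀ y, F' y = 0 → y ∈ S' := by
    intro y hy
    have hD₂0 : D₂ (A (G (D₂inv y))) = 0 := by
      simpa [hF', ContinuousLinearMap.comp_apply] using hy
    have : A (G (D₂inv y)) = 0 := by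
      have := congrArg D₂inv hD₂0
      rwa [hID₂, map_zero] at this
    have hGq : G (D₂inv y) = 0 := by
      rw [← hGAG (D₂inv y), this, map_zero]
    have hqS : D₂inv y ∈ S := (hmemS _).mp hGq
    have : D₂ (D₂inv y) ∈ S' := hD₂S _ hqS
    rwa [hD₂I] at this
  have hF'idem : ∀ y, F' (F' y) = F' y := by
    intro y
    simp only [hF', ContinuousLinearMap.comp_apply]
    rw [hID₂]
    congr 1
    exact congrArg A (hGAG _)
  have hsubF'S' : ∀ y, y - F' y ∈ S' := by
    intro y
    apply hkerF'
    rw [map_sub, hF'idem, sub_self]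
  -- the outer inverse
  refine ⟨Hop ∘L Winv, ?_, ?_, ?_⟩
  · -- G' A G' = G'
    ext y
    simp only [ContinuousLinearMap.comp_apply]
    set z := Winv y with hz
    have hAH : A (Hop z) = W z - z + F' z := by rw [hWapp]; abel
    have e1 : Winv (A (Hop z)) = z - Winv z + Winv (F' z) := by
      rw [hAH, map_add, map_sub, hIW]
    have e2 : Winv z - Winv (F' z) = z - F' z := by
      rw [← map_sub]
      exact hWinvS' _ (hsubF'S' z)
    have e3 : Winv (A (Hop z)) = z - (z - F' z) := by
      rw [e1]
      have : z - Winv z + Winv (F' z) = z - (Winv z - Winv (F' z)) := by abel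
      rw [this, e2]
    have hz0 : Hop (z - F' z) = 0 := hHopS' _ (hsubF'S' z)
    calc Hop (Winv (A (Hop z))) = Hop (z - (z - F' z)) := by rw [e3]
      _ = Hop z - Hop (z - F' z) := map_sub _ _ _
      _ = Hop z := by rw [hz0, sub_zero]
  · -- range = T'
    apply le_antisymm
    · rintro x ⟨y, rfl⟩
      simp only [ContinuousLinearMap.coe_coe, ContinuousLinearMap.comp_apply, hHop]
      have hmem : G (D₂inv (Winv y)) ∈ T := by
        rw [hmemT]
        exact ⟨_, rfl⟩
      rw [hD₁u _ hmem]
      exact projCLM_mem T' hT' _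
    · intro x' hx'
      obtain ⟨t, htT, htD⟩ := hD₁surj x' hx'
      obtain ⟨yt, hyt⟩ := (hmemT t).mp htT
      refine ⟨W (D₂ yt), ?_⟩
      simp only [ContinuousLinearMap.coe_coe, ContinuousLinearMap.comp_apply]
      rw [hIW, hHop]
      simp only [ContinuousLinearMap.comp_apply]
      rw [hID₂, hyt, htD]
  · -- ker = S'
    apply le_antisymm
    · intro y hy
      have hy0 : Hop (Winv y) = 0 := hy
      have hG0 : G (D₂inv (Winv y)) = 0 := by
        have : D₁ (G (D₂inv (Winv y))) = 0 := by
          simpa [hHop, ContinuousLinearMap.comp_apply] using hy0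
        have := congrArg D₁inv this
        rwa [hID₁, map_zero] at this
      have hqS : D₂inv (Winv y) ∈ S := (hmemS _).mp hG0
      have hWinvS : Winv y ∈ S' := by
        have := hD₂S _ hqS
        rwa [hD₂I] at this
      have : y = Winv y := by
        conv_lhs => rw [← hWI y, hWS' _ hWinvS]
      rw [this]; exact hWinvS
    · intro y hy
      show Hop (Winv y) = 0
      rw [hWinvS' y hy]
      exact hHopS' y hy
end construction

section estimates
variable {X Y : Type*} [NormedAddCommGroup X] [InnerProductSpace ℂ X] [CompleteSpace X]
  [NormedAddCommGroup Y] [InnerProductSpace ℂ Y] [CompleteSpace Y]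
set_option linter.unusedSectionVars false

lemma outer_pointwise {A : X →L[ℂ] Y} {T : Submodule ℂ X} {S : Submodule ℂ Y} {G : Y →L[ℂ] X}
    (hG : IsOuterInv A T S G) : ∀ y, G (A (G y)) = G y := by
  intro y
  have := congrArg (fun (M : Y →L[ℂ] X) => M y) hG.1
  simpa using this

/-- First estimate: perturbing the range, `‖G₁ - G‖ ≤ ‖A‖ ‖G‖ δ(T',T) ‖G₁‖`. -/
lemma est_range {A : X →L[ℂ] Y} {T T' : Submodule ℂ X} {S : Submodule ℂ Y}
    (hT : IsClosed (T : Set X)) {G G₁ : Y →L[ℂ] X}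
    (hG : IsOuterInv A T S G) (hG₁ : IsOuterInv A T' S G₁) (hGne : G ≠ 0) :
    ‖G₁ - G‖ ≤ ‖A‖ * ‖G‖ * gapDelta (T' : Set X) (T : Set X) * ‖G₁‖ := by
  have hGAG := outer_pointwise hG
  have hG₁A := outer_pointwise hG₁
  set F : X →L[ℂ] X := G ∘L A with hF
  have hFidem : F ∘L F = F := by
    ext x
    simp only [ContinuousLinearMap.comp_apply, hF]
    exact hGAG (A x)
  have hFne : F ≠ 0 := by
    intro h0
    apply hGne
    ext y
    have : G (A (G y)) = 0 := by
      have := congrArg (fun (M : X →L[ℂ] X) => M (G y)) h0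
      simpa [hF] using this
    rw [hGAG y] at this
    simpa using this
  have hFnorm : ‖F‖ ≤ ‖G‖ * ‖A‖ := ContinuousLinearMap.opNorm_comp_le G A
  have key : ∀ z, ‖(G₁ - G) z‖ ≤ ‖A‖ * ‖G‖ * gapDelta (T' : Set X) (T : Set X) * ‖G₁‖ * ‖z‖ := by
    intro z
    set q := G₁ z with hq
    have hqT' : q ∈ T' := by rw [← hG₁.2.1]; exact ⟨z, rfl⟩
    -- G z = G (A q)
    have hs : G₁ (z - A (G₁ z)) = 0 := by rw [map_sub, hG₁A z, sub_self]
    have hsS : z - A (G₁ z) ∈ S := by rw [← hG₁.2.2]; exact hs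
    have hsG : G (z - A (G₁ z)) = 0 := by rw [← hG.2.2] at hsS; exact hsS
    have hGz : G z = G (A q) := by
      rw [map_sub] at hsG
      linear_combination (norm := module) hsG
    set P := projCLM T hT with hP
    have hPqT : P q ∈ T := projCLM_mem T hT q
    have hfix : G (A (P q)) = P q := by
      obtain ⟨w, hw⟩ : ∃ w, G w = P q := by
        have : P q ∈ LinearMap.range (G : Y →ₗ[ℂ] X) := by rw [hG.2.1]; exact hPqT
        exact this
      rw [← hw, hGAG w]
    set u := q - P q with hu
    have e : (G₁ - G) z = u - F u := by
      simp only [ContinuousLinearMap.sub_apply, hu, hF, ContinuousLinearMap.comp_apply]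
      rw [hGz, map_sub, map_sub, hfix]
      abel
    have hub : ‖u‖ ≤ gapDelta (T' : Set X) (T : Set X) * ‖q‖ := norm_sub_proj_le T' T hT hqT'
    have hqb : ‖q‖ ≤ ‖G₁‖ * ‖z‖ := G₁.le_opNorm z
    have h1 : ‖u - F u‖ ≤ ‖F‖ * ‖u‖ := idem_one_sub_le hFidem hFne u
    have hδ0 : 0 ≤ gapDelta (T' : Set X) (T : Set X) := gapDelta_nonneg _ _
    calc ‖(G₁ - G) z‖ = ‖u - F u‖ := by rw [e]
      _ ≤ ‖F‖ * ‖u‖ := h1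
      _ ≤ (‖G‖ * ‖A‖) * ‖u‖ := mul_le_mul_of_nonneg_right hFnorm (norm_nonneg u)
      _ ≤ (‖G‖ * ‖A‖) * (gapDelta (T' : Set X) (T : Set X) * (‖G₁‖ * ‖z‖)) := by
          apply mul_le_mul_of_nonneg_left _ (by positivity)
          calc ‖u‖ ≤ gapDelta (T' : Set X) (T : Set X) * ‖q‖ := hub
            _ ≤ gapDelta (T' : Set X) (T : Set X) * (‖G₁‖ * ‖z‖) :=
                mul_le_mul_of_nonneg_left hqb hδ0
      _ = ‖A‖ * ‖G‖ * gapDelta (T' : Set X) (T : Set X) * ‖G₁‖ * ‖z‖ := by ring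
  exact ContinuousLinearMap.opNorm_le_bound _
    (mul_nonneg (mul_nonneg (mul_nonneg (norm_nonneg A) (norm_nonneg G))
      (gapDelta_nonneg _ _)) (norm_nonneg G₁)) key

/-- Second estimate: perturbing the kernel, `‖G' - G₁‖ ≤ ‖G'‖ δ(S,S') ‖A‖ ‖G₁‖`. -/
lemma est_kernel {A : X →L[ℂ] Y} {T' : Submodule ℂ X} {S S' : Submodule ℂ Y}
    (hS' : IsClosed (S' : Set Y)) {G₁ G' : Y →L[ℂ] X}
    (hG₁ : IsOuterInv A T' S G₁) (hG' : IsOuterInv A T' S' G') (hG₁ne : G₁ ≠ 0) :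
    ‖G' - G₁‖ ≤ ‖G'‖ * gapDelta (S : Set Y) (S' : Set Y) * ‖A‖ * ‖G₁‖ := by
  have hG₁A := outer_pointwise hG₁
  have hG'A := outer_pointwise hG'
  set F : Y →L[ℂ] Y := A ∘L G₁ with hF
  have hFidem : F ∘L F = F := by
    ext y
    simp only [ContinuousLinearMap.comp_apply, hF]
    exact congrArg A (hG₁A y)
  have hFne : F ≠ 0 := by
    intro h0
    apply hG₁ne
    ext y
    have : A (G₁ y) = 0 := by
      have := congrArg (fun (M : Y →L[ℂ] Y) => M y) h0
      simpa [hF] using this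
    have := congrArg G₁ this
    rw [hG₁A y, map_zero] at this
    simpa using this
  have hFnorm : ‖F‖ ≤ ‖A‖ * ‖G₁‖ := ContinuousLinearMap.opNorm_comp_le A G₁
  have key : ∀ z, ‖(G' - G₁) z‖ ≤ ‖G'‖ * gapDelta (S : Set Y) (S' : Set Y) * ‖A‖ * ‖G₁‖ * ‖z‖ := by
    intro z
    set s := z - A (G₁ z) with hs
    have hsS : s ∈ S := by
      rw [← hG₁.2.2]
      show G₁ s = 0
      rw [hs, map_sub, hG₁A z, sub_self]
    have hfix : G' (A (G₁ z)) = G₁ z := by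
      obtain ⟨w, hw⟩ : ∃ w, G' w = G₁ z := by
        have : G₁ z ∈ T' := by rw [← hG₁.2.1]; exact ⟨z, rfl⟩
        rw [← hG'.2.1] at this
        exact this
      rw [← hw, hG'A w]
    have e : (G' - G₁) z = G' s := by
      simp only [ContinuousLinearMap.sub_apply, hs, map_sub]
      rw [hfix]
    set Q' := projCLM S' hS' with hQ'
    have hQ'0 : G' (Q' s) = 0 := by
      have : Q' s ∈ S' := projCLM_mem S' hS' s
      rw [← hG'.2.2] at this
      exact this
    have e2 : G' s = G' (s - Q' s) := by
      have h := map_sub G' s (Q' s)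
      rw [hQ'0, sub_zero] at h
      exact h.symm
    have hsb : ‖s - Q' s‖ ≤ gapDelta (S : Set Y) (S' : Set Y) * ‖s‖ :=
      norm_sub_proj_le S S' hS' hsS
    have hsn : ‖s‖ ≤ (‖A‖ * ‖G₁‖) * ‖z‖ := by
      have h1 : ‖s‖ ≤ ‖F‖ * ‖z‖ := by
        have : s = z - F z := by simp [hs, hF, ContinuousLinearMap.comp_apply]
        rw [this]
        exact idem_one_sub_le hFidem hFne z
      exact le_trans h1 (mul_le_mul_of_nonneg_right hFnorm (norm_nonneg z))
    have hδ0 : 0 ≤ gapDelta (S : Set Y) (S' : Set Y) := gapDelta_nonneg _ _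
    calc ‖(G' - G₁) z‖ = ‖G' (s - Q' s)‖ := by rw [e, e2]
      _ ≤ ‖G'‖ * ‖s - Q' s‖ := G'.le_opNorm _
      _ ≤ ‖G'‖ * (gapDelta (S : Set Y) (S' : Set Y) * ((‖A‖ * ‖G₁‖) * ‖z‖)) := by
          apply mul_le_mul_of_nonneg_left _ (norm_nonneg G')
          calc ‖s - Q' s‖ ≤ gapDelta (S : Set Y) (S' : Set Y) * ‖s‖ := hsb
            _ ≤ gapDelta (S : Set Y) (S' : Set Y) * ((‖A‖ * ‖G₁‖) * ‖z‖) :=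
                mul_le_mul_of_nonneg_left hsn hδ0
      _ = ‖G'‖ * gapDelta (S : Set Y) (S' : Set Y) * ‖A‖ * ‖G₁‖ * ‖z‖ := by ring
  exact ContinuousLinearMap.opNorm_le_bound _
    (mul_nonneg (mul_nonneg (mul_nonneg (norm_nonneg G') (gapDelta_nonneg _ _))
      (norm_nonneg A)) (norm_nonneg G₁)) key
end estimates

section degenerate
variable {H : Type*} [NormedAddCommGroup H] [InnerProductSpace ℂ H] [CompleteSpace H]
set_option linter.unusedSectionVars false

lemma le_gapDelta_of_mem (M N : Submodule ℂ H) {x : H} (hx : x ∈ M) (hnx : ‖x‖ = 1) :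
    Metric.infDist x (N : Set H) ≤ gapDelta (M : Set H) (N : Set H) :=
  le_csSup (gapDelta_bddAbove _ N) ⟨x, ⟨hx, hnx⟩, rfl⟩

lemma one_le_gapDelta_bot {M : Submodule ℂ H} (N : Submodule ℂ H) (hM : M ≠ ⊥) (hN : N = ⊥) :
    (1 : ℝ) ≤ gapDelta (M : Set H) (N : Set H) := by
  obtain ⟨x, hxM, hx0⟩ := (Submodule.ne_bot_iff M).mp hM
  have hnx : ‖x‖ ≠ 0 := norm_ne_zero_iff.mpr hx0
  set c : ℂ := (‖x‖ : ℂ)⁻¹ with hc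
  have hu : c • x ∈ M := M.smul_mem c hxM
  have hun : ‖c • x‖ = 1 := by
    rw [norm_smul, hc]
    simp [norm_inv, hnx]
  have hinf : Metric.infDist (c • x) (N : Set H) = 1 := by
    rw [hN]
    have hbotset : ((⊥ : Submodule ℂ H) : Set H) = {0} := by simp
    rw [hbotset, Metric.infDist_singleton, dist_zero_right, hun]
  rw [← hinf]
  exact le_gapDelta_of_mem M N hu hun

lemma one_le_gapDelta_top {N : Submodule ℂ H} (hN : IsClosed (N : Set H)) (hNne : N ≠ ⊤) :
    (1 : ℝ) ≤ gapDelta ((⊤ : Submodule ℂ H) : Set H) (N : Set H) := by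
  haveI := hN.completeSpace_coe
  have hbot : Nᗮ ≠ ⊥ := by
    intro h
    exact hNne (Submodule.orthogonal_eq_bot_iff.mp h)
  obtain ⟨x, hxO, hx0⟩ := (Submodule.ne_bot_iff Nᗮ).mp hbot
  have hnx : ‖x‖ ≠ 0 := norm_ne_zero_iff.mpr hx0
  set c : ℂ := (‖x‖ : ℂ)⁻¹ with hc
  have hu : c • x ∈ Nᗮ := Nᗮ.smul_mem c hxO
  have hun : ‖c • x‖ = 1 := by
    rw [norm_smul, hc]
    simp [norm_inv, hnx]
  have hinf : Metric.infDist (c • x) (N : Set H) = 1 := by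
    rw [infDist_eq_norm_sub_projCLM N hN, projCLM_eq_zero N hN hu, sub_zero, hun]
  rw [← hinf]
  exact le_gapDelta_of_mem ⊤ N trivial hun

lemma gapHat_self (M : Submodule ℂ H) : gapHat (M : Set H) (M : Set H) = 0 := by
  rw [gapHat, gapDelta_self_submodule, max_self]
end degenerate

section main
variable {X Y : Type*} [NormedAddCommGroup X] [InnerProductSpace ℂ X] [CompleteSpace X]
  [NormedAddCommGroup Y] [InnerProductSpace ℂ Y] [CompleteSpace Y]
set_option linter.unusedSectionVars false

set_option maxHeartbeats 1000000 in
theorem stmt_13' (A : X →L[ℂ] Y) (T T' : Submodule ℂ X) (S S' : Submodule ℂ Y)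
    (hT : IsClosed (T : Set X)) (hT' : IsClosed (T' : Set X))
    (hS : IsClosed (S : Set Y)) (hS' : IsClosed (S' : Set Y))
    (G : Y →L[ℂ] X) (hG : IsOuterInv A T S G)
    (hgap : max (gapHat (T : Set X) (T' : Set X)) (gapHat (S : Set Y) (S' : Set Y)) <
      1 / (1 + ‖A‖ * ‖G‖) ^ 2) :
    ∃ G' : Y →L[ℂ] X, IsOuterInv A T' S' G' ∧
      ‖G' - G‖ ≤ (1 + Real.sqrt 5) / 2 *
        (‖G‖ ^ 2 * ‖A‖ * (gapHat (T : Set X) (T' : Set X) + gapHat (S : Set Y) (S' : Set Y))) /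
        (1 - ‖G‖ * ‖A‖ * (gapHat (T : Set X) (T' : Set X) + gapHat (S : Set Y) (S' : Set Y))) := by
  classical
  by_cases hG0 : G = 0
  · -- degenerate case G = 0
    have hT0 : T = ⊥ := by
      rw [← hG.2.1, hG0]
      exact LinearMap.range_eq_bot.mpr rfl
    have hS0 : S = ⊤ := by
      rw [← hG.2.2, hG0]
      exact LinearMap.ker_eq_top.mpr rfl
    have hgap1 : max (gapHat (T : Set X) (T' : Set X)) (gapHat (S : Set Y) (S' : Set Y)) < 1 := by
      rw [hG0] at hgap
      simpa using hgap
    have hT'0 : T' = ⊥ := by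
      by_contra hne
      have h1 : (1:ℝ) ≤ gapDelta (T' : Set X) (T : Set X) := one_le_gapDelta_bot T hne hT0
      have h2 : gapDelta (T' : Set X) (T : Set X) ≤ gapHat (T : Set X) (T' : Set X) :=
        le_max_right _ _
      have h3 : gapHat (T : Set X) (T' : Set X) ≤ _ := le_max_left _ (gapHat (S : Set Y) (S' : Set Y))
      linarith
    have hS'0 : S' = ⊤ := by
      by_contra hne
      have h1 : (1:ℝ) ≤ gapDelta ((⊤ : Submodule ℂ Y) : Set Y) (S' : Set Y) :=
        one_le_gapDelta_top hS' hne
      rw [← hS0] at h1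
      have h2 : gapDelta (S : Set Y) (S' : Set Y) ≤ gapHat (S : Set Y) (S' : Set Y) :=
        le_max_left _ _
      have h3 : gapHat (S : Set Y) (S' : Set Y) ≤ _ :=
        le_max_right (gapHat (T : Set X) (T' : Set X)) _
      linarith
    refine ⟨0, ⟨?_, ?_, ?_⟩, ?_⟩
    · ext y; simp
    · rw [hT'0]; exact LinearMap.range_eq_bot.mpr rfl
    · rw [hS'0]; exact LinearMap.ker_eq_top.mpr rfl
    · rw [hG0]
      simp
  · -- main case
    have hg : 0 < ‖G‖ := norm_pos_iff.mpr hG0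
    have hκ : 1 ≤ ‖A‖ * ‖G‖ := by
      have h1 : ‖G‖ ≤ ‖G‖ * (‖A‖ * ‖G‖) := by
        calc ‖G‖ = ‖G ∘L (A ∘L G)‖ := by rw [hG.1]
          _ ≤ ‖G‖ * ‖A ∘L G‖ := ContinuousLinearMap.opNorm_comp_le _ _
          _ ≤ ‖G‖ * (‖A‖ * ‖G‖) :=
              mul_le_mul_of_nonneg_left (ContinuousLinearMap.opNorm_comp_le _ _) (norm_nonneg G)
      nlinarith
    have ha : 0 < ‖A‖ := by nlinarith [norm_nonneg A, norm_nonneg G]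
    set δ1 := gapHat (T : Set X) (T' : Set X) with hδ1def
    set δ2 := gapHat (S : Set Y) (S' : Set Y) with hδ2def
    have hδ10 : 0 ≤ δ1 := gapHat_nonneg _ _
    have hδ20 : 0 ≤ δ2 := gapHat_nonneg _ _
    have hδ1lt : δ1 < 1 / (1 + ‖A‖ * ‖G‖) ^ 2 := lt_of_le_of_lt (le_max_left _ _) hgap
    have hδ2lt : δ2 < 1 / (1 + ‖A‖ * ‖G‖) ^ 2 := lt_of_le_of_lt (le_max_right _ _) hgap
    have hqpos : (0:ℝ) < (1 + ‖A‖ * ‖G‖) ^ 2 := by positivity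
    have hq4 : 1 / (1 + ‖A‖ * ‖G‖) ^ 2 ≤ 1 / 4 := by
      rw [div_le_div_iff₀ hqpos (by norm_num)]
      nlinarith
    have hδ1q : δ1 < 1/4 := lt_of_lt_of_le hδ1lt hq4
    have hδ2q : δ2 < 1/4 := lt_of_lt_of_le hδ2lt hq4
    have hmul : ∀ δ : ℝ, 0 ≤ δ → δ < 1 / (1 + ‖A‖ * ‖G‖) ^ 2 → ‖A‖ * ‖G‖ * δ < 1/4 := by
      intro δ hδ0 hδlt
      have h' : δ * (1 + ‖A‖ * ‖G‖) ^ 2 < 1 := by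
        rw [lt_div_iff₀ hqpos] at hδlt
        exact hδlt
      nlinarith [mul_nonneg hδ0 (sq_nonneg (1 - ‖A‖ * ‖G‖))]
    have hu4 : ‖A‖ * ‖G‖ * δ1 < 1/4 := hmul δ1 hδ10 hδ1lt
    have hv4 : ‖A‖ * ‖G‖ * δ2 < 1/4 := hmul δ2 hδ20 hδ2lt
    -- build G₁ and G'
    have hSS : gapHat (S : Set Y) (S : Set Y) = 0 := gapHat_self S
    obtain ⟨G₁, hG₁⟩ := exists_outerInv A T T' S S hT hT' hS hS G hG
      (by linarith) (by rw [hSS]; norm_num) (by rw [hSS]; simp; linarith)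
    obtain ⟨G', hG'⟩ := exists_outerInv A T T' S S' hT hT' hS hS' G hG
      (by linarith) (by linarith) (by linarith)
    -- G₁ ≠ 0
    have hTne : T ≠ ⊥ := by
      intro h
      apply hG0
      ext y
      have : G y ∈ T := by rw [← hG.2.1]; exact ⟨y, rfl⟩
      rw [h] at this
      simpa using this
    have hT'ne : T' ≠ ⊥ := by
      intro h
      have h1 : (1:ℝ) ≤ gapDelta (T : Set X) (T' : Set X) := one_le_gapDelta_bot T' hTne h
      have h2 : gapDelta (T : Set X) (T' : Set X) ≤ δ1 := le_max_left _ _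
      linarith
    have hG₁ne : G₁ ≠ 0 := by
      intro h
      apply hT'ne
      rw [← hG₁.2.1, h]
      exact LinearMap.range_eq_bot.mpr rfl
    -- estimates
    have hx1 := est_range hT hG hG₁ hG0
    have hx2 := est_kernel hS' hG₁ hG' hG₁ne
    have hgd1 : gapDelta (T' : Set X) (T : Set X) ≤ δ1 := le_max_right _ _
    have hgd2 : gapDelta (S : Set Y) (S' : Set Y) ≤ δ2 := le_max_left _ _
    have hx1' : ‖G₁ - G‖ ≤ (‖A‖ * ‖G‖ * δ1) * ‖G₁‖ := by
      refine le_trans hx1 ?_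
      have := mul_le_mul_of_nonneg_left hgd1 (by positivity : (0:ℝ) ≤ ‖A‖ * ‖G‖)
      nlinarith [norm_nonneg G₁]
    have hx2' : ‖G' - G₁‖ ≤ (‖A‖ * δ2 * ‖G₁‖) * ‖G'‖ := by
      refine le_trans hx2 ?_
      calc ‖G'‖ * gapDelta (S : Set Y) (S' : Set Y) * ‖A‖ * ‖G₁‖
          = (‖G'‖ * ‖A‖ * ‖G₁‖) * gapDelta (S : Set Y) (S' : Set Y) := by ring
        _ ≤ (‖G'‖ * ‖A‖ * ‖G₁‖) * δ2 := mul_le_mul_of_nonneg_left hgd2 (by positivity)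
        _ = ‖A‖ * δ2 * ‖G₁‖ * ‖G'‖ := by ring
    have hn1 : ‖G₁‖ ≤ ‖G‖ + ‖G₁ - G‖ := by
      have h : G₁ = G + (G₁ - G) := by abel
      calc ‖G₁‖ = ‖G + (G₁ - G)‖ := by rw [← h]
        _ ≤ ‖G‖ + ‖G₁ - G‖ := norm_add_le _ _
    have hn2 : ‖G'‖ ≤ ‖G₁‖ + ‖G' - G₁‖ := by
      have h : G' = G₁ + (G' - G₁) := by abel
      calc ‖G'‖ = ‖G₁ + (G' - G₁)‖ := by rw [← h]
        _ ≤ ‖G₁‖ + ‖G' - G₁‖ := norm_add_le _ _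
    have htri : ‖G' - G‖ ≤ ‖G' - G₁‖ + ‖G₁ - G‖ := by
      have h : G' - G = (G' - G₁) + (G₁ - G) := by abel
      rw [h]
      exact norm_add_le _ _
    -- numeric assembly
    set u := ‖A‖ * ‖G‖ * δ1 with hudef
    set v := ‖A‖ * ‖G‖ * δ2 with hvdef
    set w := ‖A‖ * δ2 * ‖G₁‖ with hwdef
    have hu0 : 0 ≤ u := by positivity
    have hv0 : 0 ≤ v := by positivity
    have hw0 : 0 ≤ w := by positivity
    have s1 : (1 - u) * ‖G₁‖ ≤ ‖G‖ := by nlinarith [hx1', hn1]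
    have b1 : ‖G₁‖ ≤ (4/3) * ‖G‖ := by
      have h' : u * ‖G₁‖ ≤ (1/4) * ‖G₁‖ :=
        mul_le_mul_of_nonneg_right (le_of_lt hu4) (norm_nonneg G₁)
      nlinarith [s1]
    have c3 : (1 - u) * w ≤ v := by
      have h' : (‖A‖ * δ2) * ((1 - u) * ‖G₁‖) ≤ (‖A‖ * δ2) * ‖G‖ :=
        mul_le_mul_of_nonneg_left s1 (by positivity)
      calc (1 - u) * w = (‖A‖ * δ2) * ((1 - u) * ‖G₁‖) := by first
          | (rw [hwdef]; ring)
          | rw [hwdef]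
        _ ≤ (‖A‖ * δ2) * ‖G‖ := h'
        _ = v := by first
          | (rw [hvdef]; ring)
          | rw [hvdef]
    have hwv : w ≤ (4/3) * v := by
      have h' : (‖A‖ * δ2) * ‖G₁‖ ≤ (‖A‖ * δ2) * ((4/3) * ‖G‖) :=
        mul_le_mul_of_nonneg_left b1 (by positivity)
      calc w = (‖A‖ * δ2) * ‖G₁‖ := by first
          | (rw [hwdef]; ring)
          | rw [hwdef]
        _ ≤ (‖A‖ * δ2) * ((4/3) * ‖G‖) := h'
        _ = (4/3) * v := by first
          | (rw [hvdef]; ring)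
          | rw [hvdef]
    have hw3 : w < 1/3 := by linarith [hwv, hv4]
    have s4 : (1 - w) * ‖G'‖ ≤ ‖G₁‖ := by
      have hx2'' : ‖G' - G₁‖ ≤ w * ‖G'‖ := by
        refine le_trans hx2' (le_of_eq ?_)
        first
        | (rw [hwdef]; ring)
        | rw [hwdef]
      nlinarith [hn2]
    have c5 : (1 - u - v) * ‖G'‖ ≤ ‖G‖ := by
      have h1 : (1 - u - v) * ‖G'‖ ≤ ((1 - u) * (1 - w)) * ‖G'‖ := by
        apply mul_le_mul_of_nonneg_right _ (norm_nonneg G')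
        nlinarith [c3]
      have h2 : ((1 - u) * (1 - w)) * ‖G'‖ ≤ (1 - u) * ‖G₁‖ := by
        have : (1 - u) * ((1 - w) * ‖G'‖) ≤ (1 - u) * ‖G₁‖ :=
          mul_le_mul_of_nonneg_left s4 (by linarith [hu4])
        calc ((1 - u) * (1 - w)) * ‖G'‖ = (1 - u) * ((1 - w) * ‖G'‖) := by ring
          _ ≤ (1 - u) * ‖G₁‖ := this
      linarith [s1]
    have hD : (0:ℝ) < 1 - ‖G‖ * ‖A‖ * (δ1 + δ2) := by
      have : ‖G‖ * ‖A‖ * (δ1 + δ2) = u + v := by first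
          | (rw [hudef, hvdef]; ring)
          | rw [hudef, hvdef]
      rw [this]; linarith
    have hφ : (3:ℝ)/2 ≤ (1 + Real.sqrt 5) / 2 := by
      have h4 : Real.sqrt 4 = 2 := by
        rw [show (4:ℝ) = 2^2 by norm_num, Real.sqrt_sq (by norm_num : (0:ℝ) ≤ 2)]
      have h45 : Real.sqrt 4 ≤ Real.sqrt 5 := Real.sqrt_le_sqrt (by norm_num)
      rw [h4] at h45
      linarith
    -- the key bound
    have key : ‖G' - G‖ * (1 - (u + v)) ≤ (3/2) * (‖G‖ * (u + v)) := by
      have e0 : ‖G' - G‖ ≤ u * ‖G₁‖ + w * ‖G'‖ := by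
        have hx2'' : ‖G' - G₁‖ ≤ w * ‖G'‖ := by
          refine le_trans hx2' (le_of_eq ?_)
          first
          | (rw [hwdef]; ring)
          | rw [hwdef]
        have hx1'' : ‖G₁ - G‖ ≤ u * ‖G₁‖ := hx1'
        linarith [htri]
      have huv1 : 0 < 1 - (u + v) := by linarith
      have e1 : ‖G' - G‖ * (1 - (u + v)) ≤ (u * ‖G₁‖ + w * ‖G'‖) * (1 - (u + v)) :=
        mul_le_mul_of_nonneg_right e0 (le_of_lt huv1)
      have e2 : u * ‖G₁‖ * (1 - (u + v)) ≤ u * ‖G₁‖ * (1 - u) := by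
        apply mul_le_mul_of_nonneg_left _ (by positivity : 0 ≤ u * ‖G₁‖)
        linarith
      have e3 : u * ‖G₁‖ * (1 - u) ≤ u * ‖G‖ := by
        have := mul_le_mul_of_nonneg_left s1 hu0
        calc u * ‖G₁‖ * (1 - u) = u * ((1 - u) * ‖G₁‖) := by ring
          _ ≤ u * ‖G‖ := this
      have e4 : w * ‖G'‖ * (1 - (u + v)) ≤ w * ‖G‖ := by
        have h' : w * ((1 - u - v) * ‖G'‖) ≤ w * ‖G‖ := mul_le_mul_of_nonneg_left c5 hw0
        calc w * ‖G'‖ * (1 - (u + v)) = w * ((1 - u - v) * ‖G'‖) := by ring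
          _ ≤ w * ‖G‖ := h'
      have e5 : w * ‖G‖ ≤ (4/3) * v * ‖G‖ :=
        mul_le_mul_of_nonneg_right hwv (norm_nonneg G)
      have hug : 0 ≤ u * ‖G‖ := by positivity
      have hvg : 0 ≤ v * ‖G‖ := by positivity
      nlinarith [e1, e2, e3, e4, e5]
    refine ⟨G', hG', ?_⟩
    rw [le_div_iff₀ hD]
    have hrw1 : 1 - ‖G‖ * ‖A‖ * (δ1 + δ2) = 1 - (u + v) := by first
          | (rw [hudef, hvdef]; ring)
          | rw [hudef, hvdef]
    have hrw2 : ‖G‖ ^ 2 * ‖A‖ * (δ1 + δ2) = ‖G‖ * (u + v) := by first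
          | (rw [hudef, hvdef]; ring)
          | rw [hudef, hvdef]
    rw [hrw1, hrw2]
    have hfin : (3/2) * (‖G‖ * (u + v)) ≤ (1 + Real.sqrt 5) / 2 * (‖G‖ * (u + v)) :=
      mul_le_mul_of_nonneg_right hφ (by positivity)
    linarith [key]
end main

variable {X Y : Type*} [NormedAddCommGroup X] [InnerProductSpace ℂ X] [CompleteSpace X]
  [NormedAddCommGroup Y] [InnerProductSpace ℂ Y] [CompleteSpace Y]
theorem stmt_13 (A : X →L[ℂ] Y) (T T' : Submodule ℂ X) (S S' : Submodule ℂ Y)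
    (hT : IsClosed (T : Set X)) (hT' : IsClosed (T' : Set X))
    (hS : IsClosed (S : Set Y)) (hS' : IsClosed (S' : Set Y))
    (G : Y →L[ℂ] X) (hG : IsOuterInv A T S G)
    (hgap : max (gapHat (T : Set X) (T' : Set X)) (gapHat (S : Set Y) (S' : Set Y)) <
      1 / (1 + ‖A‖ * ‖G‖) ^ 2) :
    ∃ G' : Y →L[ℂ] X, IsOuterInv A T' S' G' ∧
      ‖G' - G‖ ≤ (1 + Real.sqrt 5) / 2 *
        (‖G‖ ^ 2 * ‖A‖ * (gapHat (T : Set X) (T' : Set X) + gapHat (S : Set Y) (S' : Set Y))) /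
        (1 - ‖G‖ * ‖A‖ * (gapHat (T : Set X) (T' : Set X) + gapHat (S : Set Y) (S' : Set Y))) :=
  stmt_13' A T T' S S' hT hT' hS hS' G hG hgap
end
end

section
/- Let X, Y be Hilbert spaces, A, E ∈ B(X,Y), Ā = A + E, and T ⊆ X, S ⊆ Y closed subspaces such that G = A_{T,S}^{(2)} exists. If ‖G‖·‖E‖ < 1, then Ā_{T,S}^{(2)} exists and Ā_{T,S}^{(2)} = (I_X + GE)^{-1}G = G(I_Y + EG)^{-1}. -/
noncomputable section

open ContinuousLinearMap

variable {X Y : Type*} [NormedAddCommGroup X] [InnerProductSpace ℂ X] [CompleteSpace X]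
  [NormedAddCommGroup Y] [InnerProductSpace ℂ Y] [CompleteSpace Y]
theorem stmt_14 (A E : X →L[ℂ] Y) (T : Submodule ℂ X) (S : Submodule ℂ Y)
    (hT : IsClosed (T : Set X)) (hS : IsClosed (S : Set Y))
    (G : Y →L[ℂ] X) (hG : IsOuterInv A T S G)
    (hE : ‖G‖ * ‖E‖ < 1) :
    ∃ Gbar : Y →L[ℂ] X, IsOuterInv (A + E) T S Gbar ∧
      Gbar = Ring.inverse (1 + G ∘L E) ∘L G ∧
      Gbar = G ∘L Ring.inverse (1 + E ∘L G) := by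
  obtain ⟨hGAG, hrange, hker⟩ := hG
  have hEG : ‖-(E ∘L G)‖ < 1 := by
    rw [norm_neg]
    calc ‖E ∘L G‖ ≤ ‖E‖ * ‖G‖ := opNorm_comp_le _ _
    _ < 1 := by rwa [mul_comm]
  have hGE : ‖-(G ∘L E)‖ < 1 := by
    rw [norm_neg]
    exact lt_of_le_of_lt (opNorm_comp_le _ _) hE
  let u : (Y →L[ℂ] Y)ˣ := Units.oneSub _ hEG
  let v : (X →L[ℂ] X)ˣ := Units.oneSub _ hGE
  have hu : (u : Y →L[ℂ] Y) = 1 + E ∘L G := by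
    show 1 - -(E ∘L G) = 1 + E ∘L G
    rw [sub_neg_eq_add]
  have hv : (v : X →L[ℂ] X) = 1 + G ∘L E := by
    show 1 - -(G ∘L E) = 1 + G ∘L E
    rw [sub_neg_eq_add]
  have hGAGa : ∀ y, G (A (G y)) = G y := fun y => by
    have := congrFun (congrArg DFunLike.coe hGAG) y
    simpa [comp_apply] using this
  have huua : ∀ z, (u : Y →L[ℂ] Y) ((↑u⁻¹ : Y →L[ℂ] Y) z) = z := fun z => by
    have := congrFun (congrArg DFunLike.coe u.mul_inv) z
    exact this
  have huua' : ∀ z, (↑u⁻¹ : Y →L[ℂ] Y) ((u : Y →L[ℂ] Y) z) = z := fun z => by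
    have := congrFun (congrArg DFunLike.coe u.inv_mul) z
    exact this
  have hvva : ∀ x, (v : X →L[ℂ] X) ((↑v⁻¹ : X →L[ℂ] X) x) = x := fun x => by
    have := congrFun (congrArg DFunLike.coe v.mul_inv) x
    exact this
  have hvva' : ∀ x, (↑v⁻¹ : X →L[ℂ] X) ((v : X →L[ℂ] X) x) = x := fun x => by
    have := congrFun (congrArg DFunLike.coe v.inv_mul) x
    exact this
  have keya : ∀ y, (v : X →L[ℂ] X) (G y) = G ((u : Y →L[ℂ] Y) y) := fun y => by
    rw [hu, hv]
    simp [comp_apply, add_apply]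
  have key2a : ∀ y, (↑v⁻¹ : X →L[ℂ] X) (G y) = G ((↑u⁻¹ : Y →L[ℂ] Y) y) := fun y => by
    conv_lhs => rw [← huua y, ← keya, hvva']
  have key2 : (↑v⁻¹ : X →L[ℂ] X) ∘L G = G ∘L (↑u⁻¹ : Y →L[ℂ] Y) := by
    ext y; exact key2a y
  refine ⟨G ∘L (↑u⁻¹ : Y →L[ℂ] Y), ⟨?_, ?_, ?_⟩, ?_, ?_⟩
  · -- outer inverse equation
    ext y
    simp only [comp_apply, add_apply]
    set z := (↑u⁻¹ : Y →L[ℂ] Y) y with hz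
    have h1 : G (A (G z) + E (G z)) = (v : X →L[ℂ] X) (G z) := by
      rw [map_add, hGAGa, hv]
      simp [add_apply, comp_apply]
    calc G ((↑u⁻¹ : Y →L[ℂ] Y) (A (G z) + E (G z)))
        = (↑v⁻¹ : X →L[ℂ] X) (G (A (G z) + E (G z))) := (key2a _).symm
      _ = (↑v⁻¹ : X →L[ℂ] X) ((v : X →L[ℂ] X) (G z)) := by rw [h1]
      _ = G z := hvva' _
  · -- range
    apply le_antisymm
    · rintro x ⟨y, rfl⟩
      rw [← hrange]
      exact ⟨(↑u⁻¹ : Y →L[ℂ] Y) y, rfl⟩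
    · intro x hx
      rw [← hrange] at hx
      obtain ⟨y, rfl⟩ := hx
      refine ⟨(u : Y →L[ℂ] Y) y, ?_⟩
      show G ((↑u⁻¹ : Y →L[ℂ] Y) ((u : Y →L[ℂ] Y) y)) = G y
      rw [huua']
  · -- kernel
    ext y
    simp only [LinearMap.mem_ker, ← hker]
    constructor
    · intro h
      have h2 : (↑v⁻¹ : X →L[ℂ] X) (G y) = 0 := by
        rw [key2a]
        exact h
      have := congrArg (v : X →L[ℂ] X) h2
      rwa [hvva, map_zero] at this
    · intro h
      show G ((↑u⁻¹ : Y →L[ℂ] Y) y) = 0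
      rw [← key2a, show G y = 0 from h, map_zero]
  · rw [← hv, Ring.inverse_unit, key2]
  · rw [← hu, Ring.inverse_unit]
end
end

section
/- Let X, Y be Hilbert spaces, A, E ∈ B(X,Y), Ā = A + E, and T ⊆ X, S ⊆ Y closed subspaces such that G = A_{T,S}^{(2)} exists and ‖G‖·‖E‖ < 1. Then ‖Ā_{T,S}^{(2)}‖ ≤ ‖G‖/(1 − ‖G‖·‖E‖) and ‖Ā_{T,S}^{(2)} − G‖ ≤ ‖G‖²·‖E‖/(1 − ‖G‖·‖E‖). -/
noncomputable section

open ContinuousLinearMap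

variable {X Y : Type*} [NormedAddCommGroup X] [InnerProductSpace ℂ X] [CompleteSpace X]
  [NormedAddCommGroup Y] [InnerProductSpace ℂ Y] [CompleteSpace Y]
theorem stmt_15 (A E : X →L[ℂ] Y) (T : Submodule ℂ X) (S : Submodule ℂ Y)
    (hT : IsClosed (T : Set X)) (hS : IsClosed (S : Set Y))
    (G : Y →L[ℂ] X) (hG : IsOuterInv A T S G)
    (hE : ‖G‖ * ‖E‖ < 1) :
    ∃ Gbar : Y →L[ℂ] X, IsOuterInv (A + E) T S Gbar ∧
      ‖Gbar‖ ≤ ‖G‖ / (1 - ‖G‖ * ‖E‖) ∧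
      ‖Gbar - G‖ ≤ ‖G‖ ^ 2 * ‖E‖ / (1 - ‖G‖ * ‖E‖) := by
  obtain ⟨hGAG, hR, hN⟩ := hG
  set K : X →L[ℂ] X := G ∘L E with hKdef
  have hKnorm : ‖K‖ < 1 := lt_of_le_of_lt (opNorm_comp_le G E) hE
  have hKnorm' : ‖-K‖ < 1 := by simpa using hKnorm
  set u : (X →L[ℂ] X)ˣ := Units.oneSub (-K) hKnorm' with hudef
  have hu : (u : X →L[ℂ] X) = 1 + K := by
    simp [hudef, Units.oneSub, sub_neg_eq_add]
  set V : X →L[ℂ] X := ((u⁻¹ : (X →L[ℂ] X)ˣ) : X →L[ℂ] X) with hVdef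
  clear_value V
  have hVu : ∀ x, V ((u : X →L[ℂ] X) x) = x := by
    intro x
    have h := DFunLike.congr_fun u.inv_mul x
    simpa only [hVdef, ContinuousLinearMap.mul_apply, ContinuousLinearMap.one_apply] using h
  have huV : ∀ x, (u : X →L[ℂ] X) (V x) = x := by
    intro x
    have h := DFunLike.congr_fun u.mul_inv x
    simpa only [hVdef, ContinuousLinearMap.mul_apply, ContinuousLinearMap.one_apply] using h
  have hVid : ∀ x, V x = x - K (V x) := by
    intro x
    have h := huV x
    rw [hu] at h
    simp only [ContinuousLinearMap.add_apply, ContinuousLinearMap.one_apply] at h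
    exact eq_sub_of_add_eq h
  have hKT : ∀ x, K x ∈ T := by
    intro x
    have : K x ∈ LinearMap.range (G : Y →ₗ[ℂ] X) := ⟨E x, rfl⟩
    rwa [hR] at this
  have hVT : ∀ x, x ∈ T → V x ∈ T := by
    intro x hx
    rw [hVid x]
    exact sub_mem hx (hKT _)
  have huT : ∀ x, x ∈ T → (u : X →L[ℂ] X) x ∈ T := by
    intro x hx
    rw [hu]
    simpa using add_mem hx (hKT x)
  have hGT : ∀ y, G y ∈ T := by
    intro y
    have : G y ∈ LinearMap.range (G : Y →ₗ[ℂ] X) := ⟨y, rfl⟩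
    rwa [hR] at this
  refine ⟨V ∘L G, ⟨?_, ?_, ?_⟩, ?_, ?_⟩
  · -- outer inverse
    ext y
    have ht : V (G y) ∈ LinearMap.range (G : Y →ₗ[ℂ] X) := by
      rw [hR]; exact hVT _ (hGT y)
    obtain ⟨z, hz⟩ := ht
    show V (G ((A + E) (V (G y)))) = V (G y)
    have hz' : G z = V (G y) := hz; rw [← hz']
    have h1 : G ((A + E) (G z)) = (u : X →L[ℂ] X) (G z) := by
      have hgag : G (A (G z)) = G z := DFunLike.congr_fun hGAG z
      rw [hu]
      simp only [ContinuousLinearMap.add_apply, ContinuousLinearMap.one_apply, map_add, hgag]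
      rfl
    rw [h1, hVu]
  · -- range
    apply le_antisymm
    · rintro x ⟨y, rfl⟩
      exact hVT _ (hGT y)
    · intro t ht
      have : (u : X →L[ℂ] X) t ∈ LinearMap.range (G : Y →ₗ[ℂ] X) := by rw [hR]; exact huT t ht
      obtain ⟨y, hy⟩ := this
      exact ⟨y, by show V (G y) = t; have hy' : G y = (u : X →L[ℂ] X) t := hy; rw [hy', hVu]⟩
  · -- kernel
    rw [← hN]
    ext y
    simp only [LinearMap.mem_ker, ContinuousLinearMap.coe_comp', Function.comp_apply]
    constructor
    · intro h
      have := congrArg (u : X →L[ℂ] X) h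
      simpa [huV] using this
    · intro h; have h' : G y = 0 := h; simp [h']
  · -- first norm bound
    have hpos : 0 < 1 - ‖G‖ * ‖E‖ := by linarith
    have hid : V ∘L G = G - K ∘L (V ∘L G) := by
      ext y
      show V (G y) = G y - K (V (G y))
      exact hVid (G y)
    have hb : ‖V ∘L G‖ ≤ ‖G‖ + ‖G‖ * ‖E‖ * ‖V ∘L G‖ := by
      calc ‖V ∘L G‖ = ‖G - K ∘L (V ∘L G)‖ := by rw [← hid]
        _ ≤ ‖G‖ + ‖K ∘L (V ∘L G)‖ := norm_sub_le _ _
        _ ≤ ‖G‖ + ‖G‖ * ‖E‖ * ‖V ∘L G‖ := by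
            refine add_le_add_right ?_ _
            calc ‖K ∘L (V ∘L G)‖ ≤ ‖K‖ * ‖V ∘L G‖ := opNorm_comp_le _ _
              _ ≤ ‖G‖ * ‖E‖ * ‖V ∘L G‖ := by gcongr; exact opNorm_comp_le G E
    rw [le_div_iff₀ hpos]
    nlinarith [norm_nonneg (V ∘L G)]
  · -- second norm bound
    have hpos : 0 < 1 - ‖G‖ * ‖E‖ := by linarith
    have hid : V ∘L G - G = -(K ∘L (V ∘L G)) := by
      ext y
      show V (G y) - G y = -(K (V (G y)))
      have := hVid (G y)
      linear_combination (norm := abel) this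
    have hb : ‖V ∘L G‖ ≤ ‖G‖ + ‖G‖ * ‖E‖ * ‖V ∘L G‖ := by
      have hid2 : V ∘L G = G - K ∘L (V ∘L G) := by
        ext y
        show V (G y) = G y - K (V (G y))
        exact hVid (G y)
      calc ‖V ∘L G‖ = ‖G - K ∘L (V ∘L G)‖ := by rw [← hid2]
        _ ≤ ‖G‖ + ‖K ∘L (V ∘L G)‖ := norm_sub_le _ _
        _ ≤ ‖G‖ + ‖G‖ * ‖E‖ * ‖V ∘L G‖ := by
            refine add_le_add_right ?_ _
            calc ‖K ∘L (V ∘L G)‖ ≤ ‖K‖ * ‖V ∘L G‖ := opNorm_comp_le _ _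
              _ ≤ ‖G‖ * ‖E‖ * ‖V ∘L G‖ := by
                  gcongr; exact opNorm_comp_le G E
    have h2 : ‖V ∘L G - G‖ ≤ ‖G‖ * ‖E‖ * ‖V ∘L G‖ := by
      rw [hid, norm_neg]
      calc ‖K ∘L (V ∘L G)‖ ≤ ‖K‖ * ‖V ∘L G‖ := opNorm_comp_le _ _
        _ ≤ ‖G‖ * ‖E‖ * ‖V ∘L G‖ := by gcongr; exact opNorm_comp_le G E
    have hB : ‖V ∘L G‖ * (1 - ‖G‖ * ‖E‖) ≤ ‖G‖ := by nlinarith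
    rw [le_div_iff₀ hpos]
    calc ‖V ∘L G - G‖ * (1 - ‖G‖ * ‖E‖)
        ≤ (‖G‖ * ‖E‖ * ‖V ∘L G‖) * (1 - ‖G‖ * ‖E‖) :=
          mul_le_mul_of_nonneg_right h2 hpos.le
      _ = (‖G‖ * ‖E‖) * (‖V ∘L G‖ * (1 - ‖G‖ * ‖E‖)) := by ring
      _ ≤ (‖G‖ * ‖E‖) * ‖G‖ :=
          mul_le_mul_of_nonneg_left hB (mul_nonneg (norm_nonneg G) (norm_nonneg E))
      _ = ‖G‖ ^ 2 * ‖E‖ := by ring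
end
end

section
/- Let X, Y be Hilbert spaces, A ∈ B(X,Y) with closed range, and δA ∈ B(X,Y) with ‖A⁺‖·‖δA‖ < 1; put Ā = A + δA. If R(Ā) ∩ R(A)^⊥ = {0} (stable perturbation), then R(Ā) is closed and B := A⁺(I + δA·A⁺)^{-1} = (I + A⁺·δA)^{-1}A⁺ satisfies ĀBĀ = Ā and BĀB = B, and ‖B‖ ≤ ‖A⁺‖/(1 − ‖A⁺‖·‖δA‖). -/
noncomputable section

open ContinuousLinearMap

variable {X Y : Type*} [NormedAddCommGroup X] [InnerProductSpace ℂ X] [CompleteSpace X]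
  [NormedAddCommGroup Y] [InnerProductSpace ℂ Y] [CompleteSpace Y]
theorem stmt_18 (A dA : X →L[ℂ] Y) (hR : IsClosed ((LinearMap.range (A : X →ₗ[ℂ] Y) : Submodule ℂ Y) : Set Y))
    (Ap : Y →L[ℂ] X) (hAp : IsMPInv A Ap)
    (hsmall : ‖Ap‖ * ‖dA‖ < 1)
    (hstable : LinearMap.range ((A + dA : X →L[ℂ] Y) : X →ₗ[ℂ] Y) ⊓ (LinearMap.range (A : X →ₗ[ℂ] Y))ᗮ = ⊥) :
    IsClosed ((LinearMap.range ((A + dA : X →L[ℂ] Y) : X →ₗ[ℂ] Y) : Submodule ℂ Y) : Set Y) ∧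
    Ap ∘L Ring.inverse (1 + dA ∘L Ap) = Ring.inverse (1 + Ap ∘L dA) ∘L Ap ∧
    (A + dA) ∘L ((Ap ∘L Ring.inverse (1 + dA ∘L Ap)) ∘L (A + dA)) = A + dA ∧
    (Ap ∘L Ring.inverse (1 + dA ∘L Ap)) ∘L
        ((A + dA) ∘L (Ap ∘L Ring.inverse (1 + dA ∘L Ap))) =
      Ap ∘L Ring.inverse (1 + dA ∘L Ap) ∧
    ‖Ap ∘L Ring.inverse (1 + dA ∘L Ap)‖ ≤ ‖Ap‖ / (1 - ‖Ap‖ * ‖dA‖) := by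
  obtain ⟨h1, h2, h3, h4⟩ := hAp
  set s : Y →L[ℂ] Y := dA ∘L Ap with hs_def
  set t : X →L[ℂ] X := Ap ∘L dA with ht_def
  have hs : ‖s‖ < 1 := lt_of_le_of_lt (opNorm_comp_le dA Ap) (by rw [mul_comm]; exact hsmall)
  have ht : ‖t‖ < 1 := lt_of_le_of_lt (opNorm_comp_le Ap dA) hsmall
  have hu : IsUnit (1 + s) := by
    have := isUnit_one_sub_of_norm_lt_one (x := -s) (by simpa using hs)
    simpa [sub_neg_eq_add] using this
  have hv : IsUnit (1 + t) := by
    have := isUnit_one_sub_of_norm_lt_one (x := -t) (by simpa using ht)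
    simpa [sub_neg_eq_add] using this
  set iu : Y →L[ℂ] Y := Ring.inverse (1 + s) with hiu_def
  set iv : X →L[ℂ] X := Ring.inverse (1 + t) with hiv_def
  have hiu1 : (1 + s) ∘L iu = 1 := by
    rw [← ContinuousLinearMap.mul_def]; exact Ring.mul_inverse_cancel _ hu
  have hiu2 : iu ∘L (1 + s) = 1 := by
    rw [← ContinuousLinearMap.mul_def]; exact Ring.inverse_mul_cancel _ hu
  have hiv2 : iv ∘L (1 + t) = 1 := by
    rw [← ContinuousLinearMap.mul_def]; exact Ring.inverse_mul_cancel _ hv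
  -- pointwise versions
  have hiu1' : ∀ y, (1 + s) (iu y) = y := fun y => by
    have := congrArg (fun f => f y) hiu1; simpa using this
  have hiu2' : ∀ y, iu ((1 + s) y) = y := fun y => by
    have := congrArg (fun f => f y) hiu2; simpa using this
  have hiv2' : ∀ x, iv ((1 + t) x) = x := fun x => by
    have := congrArg (fun f => f x) hiv2; simpa using this
  have h1' : ∀ x, A (Ap (A x)) = A x := fun x => by
    have := congrArg (fun f => f x) h1; simpa using this
  have h2' : ∀ y, Ap (A (Ap y)) = Ap y := fun y => by
    have := congrArg (fun f => f y) h2; simpa using this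
  -- key commutation
  have key : ∀ z : Y, (1 + t) (Ap z) = Ap ((1 + s) z) := by
    intro z
    simp [hs_def, ht_def]
  have hBc : ∀ y : Y, Ap (iu y) = iv (Ap y) := by
    intro y
    calc Ap (iu y) = iv ((1 + t) (Ap (iu y))) := (hiv2' _).symm
      _ = iv (Ap ((1 + s) (iu y))) := by rw [key]
      _ = iv (Ap y) := by rw [hiu1']
  have hBcomm : Ap ∘L iu = iv ∘L Ap := by
    ext y; simpa using hBc y
  -- B Ā B = B
  have goal4 : (Ap ∘L iu) ∘L ((A + dA) ∘L (Ap ∘L iu)) = Ap ∘L iu := by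
    ext x
    simp only [comp_apply]
    calc Ap (iu ((A + dA) (Ap (iu x))))
        = iv (Ap ((A + dA) (Ap (iu x)))) := hBc _
      _ = iv (Ap (A (Ap (iu x))) + Ap (dA (Ap (iu x)))) := by
          simp
      _ = iv ((1 + t) (Ap (iu x))) := by
          rw [h2']; simp [ht_def]
      _ = Ap (iu x) := hiv2' _
  -- stable perturbation gives Ā B Ā = Ā
  have hortho : ∀ z : Y, (z - A (Ap z)) ∈ (LinearMap.range (A : X →ₗ[ℂ] Y))ᗮ := by
    intro z
    rw [Submodule.mem_orthogonal]
    rintro _ ⟨x, rfl⟩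
    have hadj : (inner ℂ (A x) (A (Ap z)) : ℂ) = inner ℂ (A x) z := by
      have := ContinuousLinearMap.adjoint_inner_left (A ∘L Ap) z (A x)
      rw [h3] at this
      calc (inner ℂ (A x) (A (Ap z)) : ℂ) = inner ℂ ((A ∘L Ap) (A x)) z := by
            rw [this]; simp
        _ = inner ℂ (A x) z := by simp [h1' x]
    rw [ContinuousLinearMap.coe_coe, inner_sub_right, hadj, sub_self]
  have goal3' : ∀ x : X, (A + dA) (Ap (iu ((A + dA) x))) = (A + dA) x := by
    intro x
    set z : Y := iu ((A + dA) x) with hz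
    have hz1 : (A + dA) x = z + s z := by
      have := hiu1' ((A + dA) x)
      rw [← hz] at this
      simpa using this.symm
    have hdiff : (A + dA) x - (A + dA) (Ap z) = z - A (Ap z) := by
      have : (A + dA) (Ap z) = A (Ap z) + s z := by simp [hs_def]
      rw [this, hz1]; abel
    have hmem1 : z - A (Ap z) ∈ LinearMap.range ((A + dA : X →L[ℂ] Y) : X →ₗ[ℂ] Y) := by
      rw [← hdiff]
      exact ⟨x - Ap z, by simp only [ContinuousLinearMap.coe_coe, ContinuousLinearMap.add_apply, map_sub]⟩
    have hmem2 : z - A (Ap z) ∈ (LinearMap.range (A : X →ₗ[ℂ] Y))ᗮ := hortho z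
    have hzero : z - A (Ap z) = 0 := by
      have : z - A (Ap z) ∈ LinearMap.range ((A + dA : X →L[ℂ] Y) : X →ₗ[ℂ] Y) ⊓ (LinearMap.range (A : X →ₗ[ℂ] Y))ᗮ := ⟨hmem1, hmem2⟩
      rw [hstable] at this
      simpa using this
    have : (A + dA) x - (A + dA) (Ap z) = 0 := by rw [hdiff, hzero]
    have := sub_eq_zero.mp this
    exact this.symm
  have goal3 : (A + dA) ∘L ((Ap ∘L iu) ∘L (A + dA)) = A + dA := by
    ext x; simp only [comp_apply]; exact goal3' x
  -- closed range
  have goal1 : IsClosed ((LinearMap.range ((A + dA : X →L[ℂ] Y) : X →ₗ[ℂ] Y) : Submodule ℂ Y) : Set Y) := by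
    have hker : (LinearMap.range ((A + dA : X →L[ℂ] Y) : X →ₗ[ℂ] Y) : Submodule ℂ Y) =
        LinearMap.ker ((1 - (A + dA) ∘L (Ap ∘L iu) : Y →L[ℂ] Y) : Y →ₗ[ℂ] Y) := by
      ext y
      constructor
      · rintro ⟨x, rfl⟩
        have := goal3' x
        simp only [LinearMap.mem_ker, ContinuousLinearMap.coe_coe, ContinuousLinearMap.sub_apply, one_apply, comp_apply]
        rw [this]; exact sub_self _
      · intro hy
        simp only [LinearMap.mem_ker, ContinuousLinearMap.coe_coe, ContinuousLinearMap.sub_apply, one_apply,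
          comp_apply] at hy
        have : y = (A + dA) (Ap (iu y)) := by
          have := sub_eq_zero.mp hy; exact this
        exact ⟨Ap (iu y), this.symm⟩
    rw [hker]
    exact ContinuousLinearMap.isClosed_ker _
  -- norm bound
  have hiu_norm : ‖iu‖ ≤ (1 - ‖s‖)⁻¹ := by
    have hid : iu = 1 - s ∘L iu := by
      have : (1 + s) ∘L iu = iu + s ∘L iu := by
        ext y; simp
      rw [this] at hiu1
      rw [eq_sub_iff_add_eq]
      exact hiu1
    have hle : ‖iu‖ ≤ 1 + ‖s‖ * ‖iu‖ := by
      calc ‖iu‖ = ‖(1 : Y →L[ℂ] Y) - s ∘L iu‖ := by rw [← hid]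
        _ ≤ ‖(1 : Y →L[ℂ] Y)‖ + ‖s ∘L iu‖ := norm_sub_le _ _
        _ ≤ 1 + ‖s‖ * ‖iu‖ := by
            gcongr
            · rw [ContinuousLinearMap.one_def]; exact ContinuousLinearMap.norm_id_le
            · exact opNorm_comp_le _ _
    have hpos : 0 < 1 - ‖s‖ := by linarith
    rw [inv_eq_one_div, le_div_iff₀ hpos]
    have hring : ‖iu‖ * (1 - ‖s‖) = ‖iu‖ - ‖s‖ * ‖iu‖ := by ring
    rw [hring]
    linarith
  have goal5 : ‖Ap ∘L iu‖ ≤ ‖Ap‖ / (1 - ‖Ap‖ * ‖dA‖) := by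
    have hpos : 0 < 1 - ‖Ap‖ * ‖dA‖ := by linarith
    have hpos' : 0 < 1 - ‖s‖ := by linarith
    have hmono : (1 - ‖s‖)⁻¹ ≤ (1 - ‖Ap‖ * ‖dA‖)⁻¹ := by
      apply inv_anti₀ hpos
      have : ‖s‖ ≤ ‖Ap‖ * ‖dA‖ := by
        rw [mul_comm]; exact opNorm_comp_le dA Ap
      linarith
    calc ‖Ap ∘L iu‖ ≤ ‖Ap‖ * ‖iu‖ := opNorm_comp_le _ _
      _ ≤ ‖Ap‖ * (1 - ‖s‖)⁻¹ := by gcongr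
      _ ≤ ‖Ap‖ * (1 - ‖Ap‖ * ‖dA‖)⁻¹ := by gcongr
      _ = ‖Ap‖ / (1 - ‖Ap‖ * ‖dA‖) := by rw [div_eq_mul_inv]
  exact ⟨goal1, hBcomm, goal3, goal4, goal5⟩
end
end
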